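/- arXiv:1412.8693 — 3 statements merged into one kernel-verified Lean document; each statement's English description precedes it below -/
import Mathlib

section
/- In a Minkowski space whose unit ball B is indecomposable and not a segment-sum (e.g. the cross-polytope), the only bodies of constant width are dilates of B, and the Jung constant is strictly larger than the maximal Jung ratio over constant width bodies: j(M^n) > 1/2 = max over K of constant width of j(K), for n ≥ 3. -/
open Set Pointwise

/-- `V n` is `ℝ^n` (as a Euclidean space, also used as carrier for general
Minkowski spaces whose unit ball `B` is given as a set). -/
abbrev V (n : ℕ) := EuclideanSpace ℝ (Fin n)

/-- A convex body: compact, convex, with nonempty interior. -/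
def IsConvexBody {n : ℕ} (K : Set (V n)) : Prop :=
  Convex ℝ K ∧ IsCompact K ∧ (interior K).Nonempty

/-- A (centrally) symmetric unit ball of a norm. -/
def IsSymUnitBall {n : ℕ} (B : Set (V n)) : Prop :=
  IsConvexBody B ∧ B = -B

/-- Circumradius of `K` with respect to the unit ball `B`. -/
noncomputable def circum {n : ℕ} (B K : Set (V n)) : ℝ :=
  sInf {ρ : ℝ | 0 < ρ ∧ ∃ c : V n, K ⊆ c +ᵥ ρ • B}

/-- Inradius of `K` with respect to the unit ball `B`. -/
noncomputable def inrad {n : ℕ} (B K : Set (V n)) : ℝ :=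
  sSup {ρ : ℝ | 0 < ρ ∧ ∃ c : V n, c +ᵥ ρ • B ⊆ K}

/-- Diameter of `K` in the norm with unit ball `B` (via the Minkowski gauge). -/
noncomputable def mdiam {n : ℕ} (B K : Set (V n)) : ℝ :=
  sSup {d : ℝ | ∃ x ∈ K, ∃ y ∈ K, d = gauge B (x - y)}

/-- Minkowski asymmetry of `K`. -/
noncomputable def asym {n : ℕ} (K : Set (V n)) : ℝ :=
  sInf {ρ : ℝ | 0 < ρ ∧ ∃ c : V n, -K ⊆ c +ᵥ ρ • K}

/-- `K` is complete (diametrically maximal) w.r.t. the unit ball `B`. -/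
def IsCompleteBody {n : ℕ} (B K : Set (V n)) : Prop :=
  IsConvexBody K ∧ ∀ x : V n, x ∉ K → mdiam B K < mdiam B (K ∪ {x})

/-- `Kstar` is a completion of `K` w.r.t. the unit ball `B`. -/
def IsCompletionOf {n : ℕ} (B Kstar K : Set (V n)) : Prop :=
  IsCompleteBody B Kstar ∧ K ⊆ Kstar ∧ mdiam B Kstar = mdiam B K

/-- Jung ratio `R(K)/D(K)`. -/
noncomputable def jungRatio {n : ℕ} (B K : Set (V n)) : ℝ :=
  circum B K / mdiam B K

/-- Jung constant of the Minkowski space with unit ball `B`. -/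
noncomputable def jungConst {n : ℕ} (B : Set (V n)) : ℝ :=
  sSup {j : ℝ | ∃ K : Set (V n), IsConvexBody K ∧ j = jungRatio B K}

/-- Maximal Minkowski asymmetry over complete bodies. -/
noncomputable def asymConst {n : ℕ} (B : Set (V n)) : ℝ :=
  sSup {s : ℝ | ∃ K : Set (V n), IsCompleteBody B K ∧ s = asym K}

/-- Banach–Mazur distance between `K` and `C`. -/
noncomputable def dBM {n : ℕ} (K C : Set (V n)) : ℝ :=
  sInf {ρ : ℝ | 0 < ρ ∧ ∃ (A : (V n) ≃ᵃ[ℝ] (V n)) (x : V n),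
    K ⊆ A '' C ∧ A '' C ⊆ x +ᵥ ρ • K}

/-- `S` is a `k`-dimensional simplex. -/
def IsSimplexDim {n : ℕ} (k : ℕ) (S : Set (V n)) : Prop :=
  ∃ v : Fin (k + 1) → V n, AffineIndependent ℝ v ∧ S = convexHull ℝ (Set.range v)

/-- Helly property with parameter `k` for translates of `B`. -/
def HellyProp {n : ℕ} (B : Set (V n)) (k : ℕ) : Prop :=
  ∀ X : Set (V n), X.Nonempty →
    (∀ J : Finset (V n), ↑J ⊆ X → J.card ≤ k + 1 →
      (⋂ x ∈ (J : Set (V n)), (x +ᵥ B)).Nonempty) →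
    (⋂ x ∈ X, (x +ᵥ B)).Nonempty

/-- Helly dimension of `B`: the least positive `k` with the Helly property. -/
noncomputable def hellyDim {n : ℕ} (B : Set (V n)) : ℕ :=
  sInf {k : ℕ | 0 < k ∧ HellyProp B k}

/-- `K` is of constant width w.r.t. the unit ball `B`: `K - K` is a dilate of `B`. -/
def IsConstWidth {n : ℕ} (B K : Set (V n)) : Prop :=
  ∃ γ : ℝ, 0 < γ ∧ K - K = γ • B

/-- A regular `n`-simplex in Euclidean space. -/
def IsRegularSimplex {n : ℕ} (T : Set (V n)) : Prop :=
  ∃ v : Fin (n + 1) → V n, AffineIndependent ℝ v ∧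
    (∀ i j k l, i ≠ j → k ≠ l → dist (v i) (v j) = dist (v k) (v l)) ∧
    T = convexHull ℝ (Set.range v)

/-- The Euclidean unit ball in `ℝ^n`. -/
noncomputable def euclBall (n : ℕ) : Set (V n) := Metric.closedBall 0 1

/-- Pseudo completion of `K` with respect to the circumcenter `c`. -/
noncomputable def pseudoCompletion {n : ℕ} (B K : Set (V n)) (c : V n) : Set (V n) :=
  convexHull ℝ (K ∪ (c +ᵥ (mdiam B K - circum B K) • B))

/-- `B` is indecomposable: every convex summand is a homothet of `B`. -/
def IsIndecomposable {n : ℕ} (B : Set (V n)) : Prop :=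
  ∀ K L : Set (V n), Convex ℝ K → Convex ℝ L → B = K + L →
    (∃ (ρ : ℝ) (x : V n), 0 ≤ ρ ∧ K = x +ᵥ ρ • B) ∧
    (∃ (ρ : ℝ) (x : V n), 0 ≤ ρ ∧ L = x +ᵥ ρ • B)

/-- `B` is a (finite) sum of segments. -/
def IsSegmentSum {n : ℕ} (B : Set (V n)) : Prop :=
  ∃ (m : ℕ) (a b : Fin m → V n), B = ∑ i : Fin m, segment ℝ (a i) (b i)

-- helpers
lemma aux_unit {n : ℕ} (hn : 1 ≤ n) : ∃ u : V n, ‖u‖ = 1 :=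
  ⟨EuclideanSpace.single (⟨0, hn⟩ : Fin n) (1 : ℝ), by
    rw [EuclideanSpace.norm_single]; norm_num⟩

lemma aux_nontrivial {n : ℕ} (hn : 1 ≤ n) : Nontrivial (V n) := by
  obtain ⟨u, hu⟩ := aux_unit hn
  exact ⟨u, 0, by intro h; rw [h] at hu; simp at hu⟩

lemma aux_smul_vadd {n : ℕ} (c : ℝ) (x : V n) (S : Set (V n)) :
    c • (x +ᵥ S) = (c • x) +ᵥ (c • S) := by
  ext z
  simp only [Set.mem_smul_set, Set.mem_vadd_set, vadd_eq_add]
  constructor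
  · rintro ⟨w, ⟨s, hs, rfl⟩, rfl⟩
    exact ⟨c • s, ⟨s, hs, rfl⟩, by rw [smul_add]⟩
  · rintro ⟨w, ⟨s, hs, rfl⟩, rfl⟩
    exact ⟨x + s, ⟨s, hs, rfl⟩, by rw [smul_add]⟩

lemma aux_zero_int {n : ℕ} {B : Set (V n)} (hB : IsSymUnitBall B) : (0 : V n) ∈ interior B := by
  obtain ⟨⟨hc, hk, x, hx⟩, hs⟩ := hB
  have hx' : -x ∈ interior B := by
    have h1 : -x ∈ -interior B := Set.neg_mem_neg.2 hx
    have h2 : -interior B = interior (-B) := by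
      have := interior_smul₀ (G₀ := ℝ) (by norm_num : (-1:ℝ) ≠ 0) B
      rw [neg_smul_set, one_smul, neg_smul_set, one_smul] at this
      exact this.symm
    rw [h2, ← hs] at h1
    exact h1
  have h := (hc.interior) hx hx' (by norm_num : (0:ℝ) ≤ 1/2) (by norm_num : (0:ℝ) ≤ 1/2) (by norm_num)
  have : (1/2 : ℝ) • x + (1/2 : ℝ) • (-x) = 0 := by
    rw [smul_neg, add_neg_cancel]
  rwa [this] at h

theorem width_ball {n : ℕ} (hn : 3 ≤ n) {B : Set (V n)} (hB : IsSymUnitBall B)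
    (hind : IsIndecomposable B) (K : Set (V n)) (hK : IsConvexBody K) (hw : IsConstWidth B K) :
    ∃ (γ : ℝ) (c : V n), 0 < γ ∧ K = c +ᵥ γ • B := by
  obtain ⟨γ, hγ, hKK⟩ := hw
  have hBeq : B = γ⁻¹ • K + γ⁻¹ • (-K) := by
    rw [← smul_add, ← sub_eq_add_neg, hKK, smul_smul, inv_mul_cancel₀ hγ.ne', one_smul]
  obtain ⟨⟨ρ, x, hρ, hKeq⟩, -⟩ := hind _ _ (hK.1.smul _) (hK.1.neg.smul _) hBeq
  have hKeq' : K = (γ • x) +ᵥ ((γ * ρ) • B) := by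
    have h1 : K = γ • (γ⁻¹ • K) := by rw [smul_smul, mul_inv_cancel₀ hγ.ne', one_smul]
    rw [h1, hKeq, aux_smul_vadd, smul_smul]
  have hρpos : 0 < ρ := by
    rcases hρ.eq_or_lt with h | h
    · exfalso
      have hBne : B.Nonempty := ⟨0, interior_subset (aux_zero_int hB)⟩
      rw [← h, mul_zero, zero_smul_set hBne] at hKeq'
      have hsing : K = {γ • x} := by
        rw [hKeq']; ext z
        simp [Set.mem_vadd_set, vadd_eq_add, eq_comm]
      haveI : Nontrivial (V n) := aux_nontrivial (by omega)
      have := hK.2.2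
      rw [hsing, interior_singleton] at this
      exact this.ne_empty rfl
    · exact h
  exact ⟨γ * ρ, γ • x, mul_pos hγ hρpos, hKeq'⟩

-- gauge helpers
section Gauge
variable {n : ℕ} {B : Set (V n)}

lemma aux_nhds (hB : IsSymUnitBall B) : B ∈ nhds (0 : V n) :=
  mem_interior_iff_mem_nhds.1 (aux_zero_int hB)

lemma aux_zero_mem (hB : IsSymUnitBall B) : (0 : V n) ∈ B :=
  interior_subset (aux_zero_int hB)

lemma aux_neg_mem (hB : IsSymUnitBall B) {x : V n} (hx : x ∈ B) : -x ∈ B := by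
  rw [hB.2]; exact Set.neg_mem_neg.2 hx

lemma aux_gauge_neg (hB : IsSymUnitBall B) (x : V n) : gauge B (-x) = gauge B x :=
  gauge_neg (fun _ hx => aux_neg_mem hB hx) x

lemma aux_gauge_add (hB : IsSymUnitBall B) (x y : V n) :
    gauge B (x + y) ≤ gauge B x + gauge B y :=
  gauge_add_le hB.1.1 (absorbent_nhds_zero (aux_nhds hB)) x y

lemma aux_gauge_sub (hB : IsSymUnitBall B) (x y : V n) :
    gauge B (x - y) ≤ gauge B x + gauge B y := by
  rw [sub_eq_add_neg]
  exact (aux_gauge_add hB x (-y)).trans (by rw [aux_gauge_neg hB])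

lemma aux_gauge_sub_comm (hB : IsSymUnitBall B) (x y : V n) :
    gauge B (x - y) = gauge B (y - x) := by
  rw [← aux_gauge_neg hB (x - y), neg_sub]

lemma aux_mem_of_gauge_le_one (hB : IsSymUnitBall B) {z : V n} (h : gauge B z ≤ 1) : z ∈ B := by
  rw [← hB.1.2.1.isClosed.closure_eq]
  exact (gauge_le_one_iff_mem_closure hB.1.1 (aux_nhds hB)).1 h

lemma aux_mem_smul_of_gauge_le (hB : IsSymUnitBall B) {z : V n} {ρ : ℝ} (hρ : 0 < ρ)
    (h : gauge B z ≤ ρ) : z ∈ ρ • B := by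
  have h1 : gauge B (ρ⁻¹ • z) ≤ 1 := by
    rw [gauge_smul_of_nonneg (inv_nonneg.2 hρ.le), smul_eq_mul]
    calc ρ⁻¹ * gauge B z ≤ ρ⁻¹ * ρ := by
          exact mul_le_mul_of_nonneg_left h (inv_nonneg.2 hρ.le)
      _ = 1 := inv_mul_cancel₀ hρ.ne'
  exact ⟨ρ⁻¹ • z, aux_mem_of_gauge_le_one hB h1, smul_inv_smul₀ hρ.ne' z⟩

lemma aux_mem_int_of_gauge_lt_one (hB : IsSymUnitBall B) {z : V n} (h : gauge B z < 1) :
    z ∈ interior B :=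
  (gauge_lt_one_iff_mem_interior hB.1.1 (aux_nhds hB)).1 h

lemma aux_gauge_lt_one_of_int (hB : IsSymUnitBall B) {z : V n} (h : z ∈ interior B) :
    gauge B z < 1 :=
  interior_subset_gauge_lt_one B h

lemma aux_ball_subset (hB : IsSymUnitBall B) : ∃ r : ℝ, 0 < r ∧ Metric.ball (0 : V n) r ⊆ B :=
  let ⟨r, hr, h⟩ := Metric.mem_nhds_iff.1 (aux_nhds hB)
  ⟨r, hr, h⟩

lemma aux_subset_ball (hB : IsSymUnitBall B) :
    ∃ R : ℝ, 0 < R ∧ B ⊆ Metric.closedBall (0 : V n) R := by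
  obtain ⟨R, hR⟩ := hB.1.2.1.isBounded.subset_closedBall 0
  exact ⟨max R 1, by positivity, hR.trans (Metric.closedBall_subset_closedBall (le_max_left _ _))⟩

lemma aux_norm_le_gauge (hB : IsSymUnitBall B) {R : ℝ} (hR : 0 < R)
    (hsub : B ⊆ Metric.closedBall (0 : V n) R) (z : V n) : ‖z‖ / R ≤ gauge B z :=
  le_gauge_of_subset_closedBall (absorbent_nhds_zero (aux_nhds hB)) hR.le hsub

lemma aux_gauge_le_norm {r : ℝ} (hr : 0 < r) (hsub : Metric.ball (0 : V n) r ⊆ B) (z : V n) :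
    gauge B z ≤ ‖z‖ / r := by
  rw [le_div_iff₀ hr, mul_comm]
  exact mul_gauge_le_norm hsub

lemma aux_gauge_pos (hB : IsSymUnitBall B) {z : V n} (hz : z ≠ 0) : 0 < gauge B z := by
  obtain ⟨R, hR, hsub⟩ := aux_subset_ball hB
  exact lt_of_lt_of_le (div_pos (norm_pos_iff.2 hz) hR) (aux_norm_le_gauge hB hR hsub z)

lemma aux_maxnorm (hB : IsSymUnitBall B) (hn : 1 ≤ n) :
    ∃ b₀ ∈ B, 0 < ‖b₀‖ ∧ (∀ b ∈ B, ‖b‖ ≤ ‖b₀‖) ∧ gauge B b₀ = 1 := by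
  obtain ⟨b₀, hb₀B, hmax⟩ := hB.1.2.1.exists_isMaxOn ⟨0, aux_zero_mem hB⟩
    (continuous_norm.continuousOn)
  have hmax' : ∀ b ∈ B, ‖b‖ ≤ ‖b₀‖ := fun b hb => hmax hb
  obtain ⟨r, hr, hrB⟩ := aux_ball_subset hB
  obtain ⟨u, hu⟩ := aux_unit hn
  have hpos : 0 < ‖b₀‖ := by
    have hmem : (r/2) • u ∈ B := hrB (by
      simp only [Metric.mem_ball, dist_zero_right, norm_smul, hu, mul_one]
      rw [Real.norm_eq_abs, abs_of_pos (by positivity)]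
      linarith)
    have := hmax' _ hmem
    rw [norm_smul, hu, mul_one, Real.norm_eq_abs, abs_of_pos (by positivity)] at this
    linarith
  refine ⟨b₀, hb₀B, hpos, hmax', le_antisymm (gauge_le_one_of_mem hb₀B) ?_⟩
  by_contra hlt
  push_neg at hlt
  have hint : b₀ ∈ interior B := aux_mem_int_of_gauge_lt_one hB hlt
  obtain ⟨δ, hδ, hball⟩ := Metric.mem_nhds_iff.1 (mem_interior_iff_mem_nhds.1 hint)
  have hxx : ‖(δ/2) • (‖b₀‖⁻¹ • b₀)‖ = δ/2 := by
    rw [smul_smul, norm_smul, Real.norm_eq_abs,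
      abs_of_pos (mul_pos (by positivity) (inv_pos.2 hpos)), mul_assoc,
      inv_mul_cancel₀ hpos.ne', mul_one]
  have hy : b₀ + (δ/2) • (‖b₀‖⁻¹ • b₀) ∈ B := by
    apply hball
    simp only [Metric.mem_ball, dist_self_add_left, hxx]
    linarith
  have hnorm : ‖b₀ + (δ/2) • (‖b₀‖⁻¹ • b₀)‖ = ‖b₀‖ + δ/2 := by
    have h1 : b₀ + (δ/2) • (‖b₀‖⁻¹ • b₀) = (1 + δ/2 * ‖b₀‖⁻¹) • b₀ := by
      rw [smul_smul, add_smul, one_smul]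
    have hcpos : (0:ℝ) < 1 + δ/2 * ‖b₀‖⁻¹ := by
      have : (0:ℝ) < δ/2 * ‖b₀‖⁻¹ := mul_pos (by positivity) (inv_pos.2 hpos)
      linarith
    rw [h1, norm_smul, Real.norm_eq_abs, abs_of_pos hcpos, add_mul, one_mul, mul_assoc,
      inv_mul_cancel₀ hpos.ne', mul_one]
  have := hmax' _ hy
  rw [hnorm] at this
  linarith

end Gauge

section RadDiam
variable {n : ℕ} {B : Set (V n)}

lemma aux_mem_vadd_smul {c : V n} {γ : ℝ} {S : Set (V n)} {z : V n} :
    z ∈ c +ᵥ γ • S ↔ ∃ b ∈ S, c + γ • b = z := by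
  simp only [Set.mem_vadd_set, Set.mem_smul_set, vadd_eq_add]
  constructor
  · rintro ⟨w, ⟨b, hb, rfl⟩, rfl⟩
    exact ⟨b, hb, rfl⟩
  · rintro ⟨b, hb, rfl⟩
    exact ⟨γ • b, ⟨b, hb, rfl⟩, rfl⟩

lemma circum_ball (hB : IsSymUnitBall B) (hn : 1 ≤ n) (c : V n) {γ : ℝ} (hγ : 0 < γ) :
    circum B (c +ᵥ γ • B) = γ := by
  have hbdd : BddBelow {ρ : ℝ | 0 < ρ ∧ ∃ c' : V n, c +ᵥ γ • B ⊆ c' +ᵥ ρ • B} :=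
    ⟨0, fun ρ hρ => hρ.1.le⟩
  have hmem : γ ∈ {ρ : ℝ | 0 < ρ ∧ ∃ c' : V n, c +ᵥ γ • B ⊆ c' +ᵥ ρ • B} :=
    ⟨hγ, c, subset_rfl⟩
  refine le_antisymm (csInf_le hbdd hmem) (le_csInf ⟨γ, hmem⟩ ?_)
  rintro ρ ⟨hρ, c', hsub⟩
  obtain ⟨b₀, hb₀B, hb₀pos, hmax, -⟩ := aux_maxnorm hB hn
  have h1 : c + γ • b₀ ∈ c' +ᵥ ρ • B := hsub (aux_mem_vadd_smul.2 ⟨b₀, hb₀B, rfl⟩)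
  have h2 : c + γ • (-b₀) ∈ c' +ᵥ ρ • B := hsub (aux_mem_vadd_smul.2 ⟨-b₀, aux_neg_mem hB hb₀B, rfl⟩)
  obtain ⟨b1, hb1, he1⟩ := aux_mem_vadd_smul.1 h1
  obtain ⟨b2, hb2, he2⟩ := aux_mem_vadd_smul.1 h2
  have h3 : ρ • b1 = (c - c') + γ • b₀ := by
    have : ρ • b1 = (c + γ • b₀) - c' := eq_sub_of_add_eq' he1
    rw [this]; abel
  have h4 : ρ • b2 = (c - c') + γ • (-b₀) := by
    have : ρ • b2 = (c + γ • (-b₀)) - c' := eq_sub_of_add_eq' he2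
    rw [this]; abel
  have heq : ρ • (b1 - b2) = (2 * γ) • b₀ := by
    rw [smul_sub, h3, h4, smul_neg, two_mul, add_smul]; abel
  have hn1 : ‖ρ • (b1 - b2)‖ ≤ ρ * (2 * ‖b₀‖) := by
    rw [norm_smul, Real.norm_eq_abs, abs_of_pos hρ]
    refine mul_le_mul_of_nonneg_left ?_ hρ.le
    calc ‖b1 - b2‖ ≤ ‖b1‖ + ‖b2‖ := norm_sub_le _ _
      _ ≤ ‖b₀‖ + ‖b₀‖ := add_le_add (hmax _ hb1) (hmax _ hb2)
      _ = 2 * ‖b₀‖ := by ring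
  have hn2 : ‖(2 * γ) • b₀‖ = 2 * γ * ‖b₀‖ := by
    rw [norm_smul, Real.norm_eq_abs, abs_of_pos (by linarith)]
  rw [heq, hn2] at hn1
  nlinarith

lemma mdiam_ball (hB : IsSymUnitBall B) (hn : 1 ≤ n) (c : V n) {γ : ℝ} (hγ : 0 < γ) :
    mdiam B (c +ᵥ γ • B) = 2 * γ := by
  have hub : ∀ d ∈ {d : ℝ | ∃ x ∈ c +ᵥ γ • B, ∃ y ∈ c +ᵥ γ • B, d = gauge B (x - y)},
      d ≤ 2 * γ := by
    rintro d ⟨x, hx, y, hy, rfl⟩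
    obtain ⟨bx, hbx, hex⟩ := aux_mem_vadd_smul.1 hx
    obtain ⟨by', hby, hey⟩ := aux_mem_vadd_smul.1 hy
    have hxy : x - y = γ • (bx - by') := by
      rw [← hex, ← hey, smul_sub]; abel
    rw [hxy, gauge_smul_of_nonneg hγ.le, smul_eq_mul]
    have : gauge B (bx - by') ≤ 2 := by
      calc gauge B (bx - by') ≤ gauge B bx + gauge B by' := aux_gauge_sub hB _ _
        _ ≤ 1 + 1 := add_le_add (gauge_le_one_of_mem hbx) (gauge_le_one_of_mem hby)
        _ = 2 := by norm_num
    nlinarith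
  obtain ⟨b₀, hb₀B, hb₀pos, hmax, hg1⟩ := aux_maxnorm hB hn
  refine le_antisymm (Real.sSup_le hub (by positivity)) (le_csSup ⟨2 * γ, hub⟩ ?_)
  refine ⟨c + γ • b₀, aux_mem_vadd_smul.2 ⟨b₀, hb₀B, rfl⟩,
    c + γ • (-b₀), aux_mem_vadd_smul.2 ⟨-b₀, aux_neg_mem hB hb₀B, rfl⟩, ?_⟩
  have hd : (c + γ • b₀) - (c + γ • (-b₀)) = (2 * γ) • b₀ := by
    rw [smul_neg, two_mul, add_smul]; abel
  rw [hd, gauge_smul_of_nonneg (by positivity), smul_eq_mul, hg1, mul_one]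

theorem ratio_half {n : ℕ} (hn : 3 ≤ n) {B : Set (V n)} (hB : IsSymUnitBall B)
    (hind : IsIndecomposable B) (K : Set (V n)) (hK : IsConvexBody K) (hw : IsConstWidth B K) :
    jungRatio B K = 1 / 2 := by
  obtain ⟨γ, c, hγ, rfl⟩ := width_ball hn hB hind K hK hw
  rw [jungRatio, circum_ball hB (by omega) c hγ, mdiam_ball hB (by omega) c hγ]
  field_simp

end RadDiam

section Bounds
variable {n : ℕ} {B : Set (V n)}

lemma mdiam_bddAbove (hB : IsSymUnitBall B) {K : Set (V n)} (hK : Bornology.IsBounded K) :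
    BddAbove {d : ℝ | ∃ x ∈ K, ∃ y ∈ K, d = gauge B (x - y)} := by
  obtain ⟨r, hr, hrB⟩ := aux_ball_subset hB
  obtain ⟨M, hM⟩ := hK.subset_closedBall 0
  refine ⟨(M + M) / r, ?_⟩
  rintro d ⟨x, hx, y, hy, rfl⟩
  have hx' : ‖x‖ ≤ M := by simpa [Metric.mem_closedBall, dist_zero_right] using hM hx
  have hy' : ‖y‖ ≤ M := by simpa [Metric.mem_closedBall, dist_zero_right] using hM hy
  calc gauge B (x - y) ≤ ‖x - y‖ / r := aux_gauge_le_norm hr hrB _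
    _ ≤ (M + M) / r := by
        gcongr
        calc ‖x - y‖ ≤ ‖x‖ + ‖y‖ := norm_sub_le _ _
          _ ≤ M + M := add_le_add hx' hy'

lemma mdiam_nonneg (B K : Set (V n)) : 0 ≤ mdiam B K := by
  apply Real.sSup_nonneg
  rintro d ⟨x, hx, y, hy, rfl⟩
  exact gauge_nonneg _

lemma circum_nonneg (B K : Set (V n)) : 0 ≤ circum B K :=
  Real.sInf_nonneg fun ρ hρ => hρ.1.le

lemma circum_set_nonempty (hB : IsSymUnitBall B) {K : Set (V n)}
    (hK : Bornology.IsBounded K) :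
    {ρ : ℝ | 0 < ρ ∧ ∃ c : V n, K ⊆ c +ᵥ ρ • B}.Nonempty := by
  obtain ⟨r, hr, hrB⟩ := aux_ball_subset hB
  obtain ⟨M, hM⟩ := hK.subset_closedBall 0
  set ρ₀ : ℝ := (max M 0) / r + 1 with hρ₀
  have hρ₀pos : 0 < ρ₀ := by positivity
  refine ⟨ρ₀, hρ₀pos, 0, fun x hx => ?_⟩
  have hx' : ‖x‖ ≤ max M 0 := le_trans
    (by simpa [Metric.mem_closedBall, dist_zero_right] using hM hx) (le_max_left _ _)
  have hg : gauge B x ≤ ρ₀ := by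
    calc gauge B x ≤ ‖x‖ / r := aux_gauge_le_norm hr hrB _
      _ ≤ (max M 0) / r := by gcongr
      _ ≤ ρ₀ := by rw [hρ₀]; linarith
  obtain ⟨b, hb, hbe⟩ := aux_mem_smul_of_gauge_le hB hρ₀pos hg
  exact aux_mem_vadd_smul.2 ⟨b, hb, by rw [zero_add]; exact hbe⟩

lemma mdiam_pos (hB : IsSymUnitBall B) (hn : 1 ≤ n) {K : Set (V n)} (hK : IsConvexBody K) :
    0 < mdiam B K := by
  obtain ⟨R, hR, hRB⟩ := aux_subset_ball hB
  obtain ⟨x₀, hx₀⟩ := hK.2.2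
  obtain ⟨δ, hδ, hball⟩ := Metric.mem_nhds_iff.1 (mem_interior_iff_mem_nhds.1 hx₀)
  obtain ⟨u, hu⟩ := aux_unit hn
  have hyK : x₀ + (δ/2) • u ∈ K := hball (by
    simp only [Metric.mem_ball, dist_self_add_left, norm_smul, hu, mul_one, Real.norm_eq_abs]
    rw [abs_of_pos (show (0:ℝ) < δ/2 by positivity)]; linarith)
  have hx₀K : x₀ ∈ K := interior_subset hx₀
  have hd : (δ/2) / R ≤ gauge B ((x₀ + (δ/2) • u) - x₀) := by
    have h1 : (x₀ + (δ/2) • u) - x₀ = (δ/2) • u := by abel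
    rw [h1]
    have := aux_norm_le_gauge hB hR hRB ((δ/2) • u)
    rwa [norm_smul, hu, mul_one, Real.norm_eq_abs, abs_of_pos (by positivity)] at this
  have hle : gauge B ((x₀ + (δ/2) • u) - x₀) ≤ mdiam B K :=
    le_csSup (mdiam_bddAbove hB hK.2.1.isBounded) ⟨_, hyK, _, hx₀K, rfl⟩
  have : (0:ℝ) < (δ/2) / R := by positivity
  linarith

lemma circum_le_mdiam (hB : IsSymUnitBall B) (hn : 1 ≤ n) {K : Set (V n)}
    (hK : IsConvexBody K) : circum B K ≤ mdiam B K := by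
  obtain ⟨x₀, hx₀⟩ := hK.2.2
  have hx₀K : x₀ ∈ K := interior_subset hx₀
  have hDpos := mdiam_pos hB hn hK
  refine csInf_le ⟨0, fun ρ hρ => hρ.1.le⟩ ⟨hDpos, x₀, fun y hy => ?_⟩
  have hg : gauge B (y - x₀) ≤ mdiam B K :=
    le_csSup (mdiam_bddAbove hB hK.2.1.isBounded) ⟨y, hy, x₀, hx₀K, rfl⟩
  obtain ⟨b, hb, hbe⟩ := aux_mem_smul_of_gauge_le hB hDpos hg
  refine aux_mem_vadd_smul.2 ⟨b, hb, ?_⟩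
  have hbe' : mdiam B K • b = y - x₀ := hbe
  rw [hbe', add_sub_cancel]

lemma key_of_le_half (hB : IsSymUnitBall B) (hn : 1 ≤ n) (h : jungConst B ≤ 1/2) :
    ∀ K : Set (V n), IsConvexBody K → 2 * circum B K ≤ mdiam B K := by
  intro K hK
  have hbdd : BddAbove {j : ℝ | ∃ K : Set (V n), IsConvexBody K ∧ j = jungRatio B K} := by
    refine ⟨1, ?_⟩
    rintro j ⟨K', hK', rfl⟩
    rw [jungRatio]
    exact div_le_one_of_le₀ (circum_le_mdiam hB hn hK') (mdiam_nonneg B K')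
  have hj : jungRatio B K ≤ 1/2 :=
    le_trans (le_csSup hbdd ⟨K, hK, rfl⟩) h
  rw [jungRatio, div_le_iff₀ (mdiam_pos hB hn hK)] at hj
  linarith

end Bounds

section Lens
variable {n : ℕ} {B : Set (V n)}

lemma aux_convexOn_sub_left (hB : IsSymUnitBall B) (y0 : V n) :
    ConvexOn ℝ Set.univ (fun w => gauge B (y0 - w)) := by
  refine ⟨convex_univ, fun x _ y _ a b ha hb hab => ?_⟩
  have h1 : a • y0 + b • y0 = y0 := by rw [← add_smul, hab, one_smul]
  have heq : y0 - (a • x + b • y) = a • (y0 - x) + b • (y0 - y) := by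
    calc y0 - (a • x + b • y) = (a • y0 + b • y0) - (a • x + b • y) := by rw [h1]
      _ = a • (y0 - x) + b • (y0 - y) := by rw [smul_sub, smul_sub]; abel
  dsimp only
  rw [heq]
  calc gauge B (a • (y0 - x) + b • (y0 - y))
      ≤ gauge B (a • (y0 - x)) + gauge B (b • (y0 - y)) := aux_gauge_add hB _ _
    _ = a * gauge B (y0 - x) + b * gauge B (y0 - y) := by
        rw [gauge_smul_of_nonneg ha, gauge_smul_of_nonneg hb, smul_eq_mul, smul_eq_mul]
    _ = a • gauge B (y0 - x) + b • gauge B (y0 - y) := by simp [smul_eq_mul]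

lemma aux_convexOn_sub_right (hB : IsSymUnitBall B) (y0 : V n) :
    ConvexOn ℝ Set.univ (fun w => gauge B (w - y0)) := by
  have h := aux_convexOn_sub_left hB y0
  refine ⟨convex_univ, fun x hx y hy a b ha hb hab => ?_⟩
  have h' := h.2 hx hy ha hb hab
  simpa only [aux_gauge_sub_comm hB y0] using h'

lemma aux_closure_hull_bound (hB : IsSymUnitBall B) {X : Set (V n)}
    (hpair : ∀ x ∈ X, ∀ y ∈ X, gauge B (x - y) ≤ 2) :
    ∀ a ∈ closure (convexHull ℝ X), ∀ a' ∈ closure (convexHull ℝ X),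
      gauge B (a - a') ≤ 2 := by
  have hcont := continuous_gauge hB.1.1 (aux_nhds hB)
  have step1 : ∀ a ∈ convexHull ℝ X, ∀ y ∈ X, gauge B (a - y) ≤ 2 := by
    intro a ha y hy
    obtain ⟨x, hx, hle⟩ := (aux_convexOn_sub_right hB y).exists_ge_of_mem_convexHull
      (subset_univ X) ha
    exact hle.trans (hpair x hx y hy)
  have step2 : ∀ a ∈ convexHull ℝ X, ∀ a' ∈ convexHull ℝ X, gauge B (a - a') ≤ 2 := by
    intro a ha a' ha'
    obtain ⟨y, hy, hle⟩ := (aux_convexOn_sub_left hB a).exists_ge_of_mem_convexHull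
      (subset_univ X) ha'
    exact hle.trans (step1 a ha y hy)
  have step3 : ∀ a' ∈ convexHull ℝ X, ∀ a ∈ closure (convexHull ℝ X),
      gauge B (a - a') ≤ 2 := by
    intro a' ha' a ha
    have hclosed : IsClosed {w : V n | gauge B (w - a') ≤ 2} :=
      IsClosed.preimage (hcont.comp (continuous_id.sub continuous_const)) isClosed_Iic
    exact hclosed.closure_subset_iff.2 (fun w hw => step2 w hw a' ha') ha
  intro a ha a' ha'
  have hclosed : IsClosed {w : V n | gauge B (a - w) ≤ 2} :=
    IsClosed.preimage (hcont.comp (continuous_const.sub continuous_id)) isClosed_Iic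
  exact hclosed.closure_subset_iff.2 (fun w hw => step3 w hw a ha) ha'

lemma lens_center_point (hB : IsSymUnitBall B) (hn : 1 ≤ n)
    (hkey : ∀ K : Set (V n), IsConvexBody K → 2 * circum B K ≤ mdiam B K)
    {v : V n} (hv : gauge B v ≤ 2) {z : V n} (hz : z ∈ B) :
    ∃ w ∈ B ∩ (v +ᵥ B), ∀ w' ∈ B ∩ (v +ᵥ B), z - w + w' ∈ B := by
  obtain ⟨r, hr, hrB⟩ := aux_ball_subset hB
  obtain ⟨R, hR, hRB⟩ := aux_subset_ball hB
  set D : Set (V n) := B ∩ (v +ᵥ B) with hD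
  have hDB : D ⊆ B := inter_subset_left
  have hDsub : ∀ w ∈ D, gauge B w ≤ 1 ∧ gauge B (w - v) ≤ 1 := by
    rintro w ⟨hw1, hw2⟩
    refine ⟨gauge_le_one_of_mem hw1, gauge_le_one_of_mem ?_⟩
    have := Set.mem_vadd_set_iff_neg_vadd_mem.1 hw2
    rwa [vadd_eq_add, neg_add_eq_sub] at this
  set X : Set (V n) := insert 0 (insert v ((fun w => z + w) '' D)) with hX
  have hzg : gauge B z ≤ 1 := gauge_le_one_of_mem hz
  have hpair : ∀ x ∈ X, ∀ y ∈ X, gauge B (x - y) ≤ 2 := by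
    have himg : ∀ w ∈ D, gauge B (z + w) ≤ 2 := by
      intro w hw
      calc gauge B (z + w) ≤ gauge B z + gauge B w := aux_gauge_add hB _ _
        _ ≤ 1 + 1 := add_le_add hzg (hDsub w hw).1
        _ = 2 := by norm_num
    have himgv : ∀ w ∈ D, gauge B (z + w - v) ≤ 2 := by
      intro w hw
      calc gauge B (z + w - v) = gauge B (z + (w - v)) := by rw [add_sub_assoc]
        _ ≤ gauge B z + gauge B (w - v) := aux_gauge_add hB _ _
        _ ≤ 1 + 1 := add_le_add hzg (hDsub w hw).2
        _ = 2 := by norm_num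
    intro x hx y hy
    simp only [hX, mem_insert_iff, mem_image] at hx hy
    rcases hx with rfl | hx2 | ⟨w1, hw1, hw1e⟩ <;> rcases hy with rfl | hy2 | ⟨w2, hw2, hw2e⟩
    · simp [gauge_zero]
    · rw [hy2, zero_sub, aux_gauge_neg hB]; exact hv
    · rw [← hw2e, zero_sub, aux_gauge_neg hB]; exact himg w2 hw2
    · rw [hx2, sub_zero]; exact hv
    · rw [hx2, hy2, sub_self]; simp [gauge_zero]
    · rw [hx2, ← hw2e, aux_gauge_sub_comm hB]; exact himgv w2 hw2
    · rw [← hw1e, sub_zero]; exact himg w1 hw1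
    · rw [← hw1e, hy2]; exact himgv w1 hw1
    · rw [← hw1e, ← hw2e,
        show (z + w1) - (z + w2) = (w1 - v) - (w2 - v) from by abel]
      calc gauge B ((w1 - v) - (w2 - v)) ≤ gauge B (w1 - v) + gauge B (w2 - v) :=
            aux_gauge_sub hB _ _
        _ ≤ 1 + 1 := add_le_add (hDsub w1 hw1).2 (hDsub w2 hw2).2
        _ = 2 := by norm_num
  -- X is bounded
  have hXbd : Bornology.IsBounded X := by
    have hsub : X ⊆ Metric.closedBall 0 (‖z‖ + ‖v‖ + R) := by
      intro x hx
      simp only [hX, mem_insert_iff, mem_image] at hx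
      simp only [Metric.mem_closedBall, dist_zero_right]
      rcases hx with rfl | rfl | ⟨w, hw, rfl⟩
      · simp; positivity
      · have : (0:ℝ) ≤ ‖z‖ + R := by positivity
        linarith [norm_nonneg (z : V n), hR.le]
      · have hwR : ‖w‖ ≤ R := by
          have := hRB (hDB hw)
          simpa [Metric.mem_closedBall, dist_zero_right] using this
        calc ‖z + w‖ ≤ ‖z‖ + ‖w‖ := norm_add_le _ _
          _ ≤ ‖z‖ + ‖v‖ + R := by linarith [norm_nonneg (v : V n)]
    exact Metric.isBounded_closedBall.subset hsub
  have h0X : (0 : V n) ∈ X := mem_insert _ _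
  -- the approximate-center step
  have hstep : ∀ k : ℕ, ∃ cc : V n, ∀ x ∈ X, gauge B (x - cc) ≤ 1 + 2/((k:ℝ)+1) := by
    intro k
    set ε : ℝ := 1/((k:ℝ)+1) with hε
    have hεpos : 0 < ε := by positivity
    set K : Set (V n) := closure (convexHull ℝ X) + ε • B with hK
    have hXK : X ⊆ K := by
      intro x hx
      exact Set.mem_add.2 ⟨x, subset_closure (subset_convexHull ℝ X hx), ε • 0,
        ⟨0, aux_zero_mem hB, rfl⟩, by rw [smul_zero, add_zero]⟩
    have hKbody : IsConvexBody K := by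
      refine ⟨((convex_convexHull ℝ X).closure).add (hB.1.1.smul ε), ?_, ?_⟩
      · exact ((isBounded_convexHull.2 hXbd).isCompact_closure).add
          (IsCompact.smul ε hB.1.2.1)
      · have hopen : IsOpen (ε • interior B) := isOpen_interior.smul₀ hεpos.ne'
        have hsub : ε • interior B ⊆ K := by
          rintro y ⟨w, hw, rfl⟩
          exact Set.mem_add.2 ⟨0, subset_closure (subset_convexHull ℝ X h0X),
            ε • w, ⟨w, interior_subset hw, rfl⟩, by rw [zero_add]⟩
        exact ⟨ε • 0, interior_maximal hsub hopen ⟨0, aux_zero_int hB, rfl⟩⟩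
    have hdiam : mdiam B K ≤ 2 + 2*ε := by
      apply Real.sSup_le ?_ (by positivity)
      rintro d ⟨x, hx, y, hy, rfl⟩
      obtain ⟨a, ha, e1, ⟨b1, hb1, rfl⟩, rfl⟩ := Set.mem_add.1 hx
      obtain ⟨a', ha', e2, ⟨b2, hb2, rfl⟩, rfl⟩ := Set.mem_add.1 hy
      have heq : (a + ε • b1) - (a' + ε • b2) = (a - a') + (ε • b1 - ε • b2) := by abel
      rw [heq]
      calc gauge B ((a - a') + (ε • b1 - ε • b2))
          ≤ gauge B (a - a') + gauge B (ε • b1 - ε • b2) := aux_gauge_add hB _ _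
        _ ≤ 2 + (gauge B (ε • b1) + gauge B (ε • b2)) := by
            refine add_le_add (aux_closure_hull_bound hB hpair a ha a' ha')
              (aux_gauge_sub hB _ _)
        _ ≤ 2 + (ε * 1 + ε * 1) := by
            refine add_le_add le_rfl (add_le_add ?_ ?_) <;>
              · rw [gauge_smul_of_nonneg hεpos.le, smul_eq_mul]
                exact mul_le_mul_of_nonneg_left (gauge_le_one_of_mem (by assumption)) hεpos.le
        _ = 2 + 2*ε := by ring
    have hcirc : circum B K < 1 + 2*ε := by
      have := hkey K hKbody
      have h2 : 2 * circum B K ≤ 2 + 2*ε := le_trans this hdiam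
      linarith
    obtain ⟨ρ, ⟨hρpos, cc, hsub⟩, hρlt⟩ :=
      (csInf_lt_iff ⟨0, fun ρ hρ => hρ.1.le⟩
        (circum_set_nonempty hB hKbody.2.1.isBounded)).1 hcirc
    refine ⟨cc, fun x hx => ?_⟩
    obtain ⟨b, hb, hbe⟩ := aux_mem_vadd_smul.1 (hsub (hXK hx))
    have hmem : x - cc ∈ ρ • B := ⟨b, hb, by rw [← hbe]; abel⟩
    have := gauge_le_of_mem hρpos.le hmem
    have h2ε : 2*ε = 2/((k:ℝ)+1) := by rw [hε]; ring
    linarith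
  -- compact intersection
  set T : ℕ → Set (V n) := fun k => {cc | ∀ x ∈ X, gauge B (x - cc) ≤ 1 + 2/((k:ℝ)+1)} with hT
  have hcont := continuous_gauge hB.1.1 (aux_nhds hB)
  have hTclosed : ∀ k, IsClosed (T k) := by
    intro k
    have : T k = ⋂ x ∈ X, (fun cc => gauge B (x - cc)) ⁻¹' (Iic (1 + 2/((k:ℝ)+1))) := by
      ext cc; simp [hT, mem_iInter₂]
    rw [this]
    exact isClosed_biInter fun x hx =>
      IsClosed.preimage (hcont.comp (continuous_const.sub continuous_id)) isClosed_Iic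
  have hTmono : ∀ k, T (k+1) ⊆ T k := by
    intro k cc hcc x hx
    refine (hcc x hx).trans ?_
    have h1 : ((k:ℝ)+1) ≤ ((k:ℝ)+1+1) := by linarith
    have : 2/((k:ℝ)+1+1) ≤ 2/((k:ℝ)+1) := by
      apply div_le_div_of_nonneg_left (by norm_num) (by positivity) h1
    push_cast
    linarith
  have hTne : ∀ k, (T k).Nonempty := by
    intro k
    obtain ⟨cc, hcc⟩ := hstep k
    exact ⟨cc, hcc⟩
  have hT0 : IsCompact (T 0) := by
    refine IsCompact.of_isClosed_subset (isCompact_closedBall (0 : V n) (3*R))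
      (hTclosed 0) ?_
    intro cc hcc
    have := hcc 0 h0X
    rw [zero_sub, aux_gauge_neg hB] at this
    have hnle := aux_norm_le_gauge hB hR hRB cc
    simp only [Metric.mem_closedBall, dist_zero_right]
    have h3 : 1 + 2/((0:ℕ):ℝ) ≤ (3:ℝ) := by norm_num
    have : gauge B cc ≤ 3 := by
      refine this.trans ?_
      norm_num
    rw [div_le_iff₀ hR] at hnle
    calc ‖cc‖ ≤ gauge B cc * R := hnle
      _ ≤ 3 * R := by nlinarith [hR.le]
  obtain ⟨cc, hcc⟩ := IsCompact.nonempty_iInter_of_sequence_nonempty_isCompact_isClosed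
    T hTmono hTne hT0 hTclosed
  have hccle : ∀ x ∈ X, gauge B (x - cc) ≤ 1 := by
    intro x hx
    refine le_of_forall_pos_le_add ?_
    intro η hη
    obtain ⟨k, hk⟩ := exists_nat_gt (2/η)
    have hkpos : (0:ℝ) < (k:ℝ) + 1 := by positivity
    have h2 : 2/((k:ℝ)+1) < η := by
      rw [div_lt_iff₀ hkpos]
      rw [div_lt_iff₀ hη] at hk
      nlinarith
    have := (mem_iInter.1 hcc k) x hx
    linarith
  have hccB : gauge B cc ≤ 1 := by
    have := hccle 0 h0X
    rwa [zero_sub, aux_gauge_neg hB] at this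
  have hccv : gauge B (v - cc) ≤ 1 := by
    refine hccle v ?_
    simp [hX]
  refine ⟨cc, ⟨aux_mem_of_gauge_le_one hB hccB, ?_⟩, ?_⟩
  · rw [Set.mem_vadd_set_iff_neg_vadd_mem, vadd_eq_add, neg_add_eq_sub]
    have : cc - v = -(v - cc) := by abel
    rw [this]
    exact aux_neg_mem hB (aux_mem_of_gauge_le_one hB hccv)
  · intro w' hw'
    have hmem : z + w' ∈ X := by
      simp only [hX, mem_insert_iff, mem_image]
      exact Or.inr (Or.inr ⟨w', hw', rfl⟩)
    have := hccle _ hmem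
    have heq : z + w' - cc = z - cc + w' := by abel
    rw [heq] at this
    exact aux_mem_of_gauge_le_one hB this

end Lens

section LensEq
variable {n : ℕ} {B : Set (V n)}

lemma aux_vadd_cancel {S : Set (V n)} (hne : S.Nonempty) {M : ℝ}
    (hbd : ∀ s ∈ S, ‖s‖ ≤ M) {a b : V n} (h : a +ᵥ S = b +ᵥ S) : a = b := by
  by_contra hab
  set d : V n := a - b with hd
  have hdne : d ≠ 0 := sub_ne_zero.2 hab
  have hstep : ∀ s ∈ S, s + d ∈ S := by
    intro s hs
    have h1 : a + s ∈ b +ᵥ S := by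
      rw [← h]
      exact ⟨s, hs, rfl⟩
    obtain ⟨s', hs', he⟩ := h1
    have : s' = s + d := by
      rw [hd]
      have : b + s' = a + s := he
      have h2 : s' = a + s - b := by rw [← this]; abel
      rw [h2]; abel
    rwa [← this]
  obtain ⟨s₀, hs₀⟩ := hne
  have hiter : ∀ k : ℕ, s₀ + (k : ℝ) • d ∈ S := by
    intro k
    induction k with
    | zero => simpa using hs₀
    | succ m ih =>
        have h1 := hstep _ ih
        have heq : s₀ + (m:ℝ) • d + d = s₀ + ((m:ℝ)+1) • d := by
          rw [add_smul, one_smul]; abel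
        rw [heq] at h1
        push_cast
        exact h1
  obtain ⟨k, hk⟩ := exists_nat_gt ((M + ‖s₀‖) / ‖d‖)
  have hdpos : 0 < ‖d‖ := norm_pos_iff.2 hdne
  have h1 : (M + ‖s₀‖) < (k:ℝ) * ‖d‖ := by
    rw [div_lt_iff₀ hdpos] at hk
    linarith
  have h2 : ‖(k:ℝ) • d‖ ≤ M + ‖s₀‖ := by
    have h3 : (k:ℝ) • d = (s₀ + (k:ℝ) • d) - s₀ := by abel
    rw [h3]
    calc ‖(s₀ + (k:ℝ) • d) - s₀‖ ≤ ‖s₀ + (k:ℝ) • d‖ + ‖s₀‖ := norm_sub_le _ _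
      _ ≤ M + ‖s₀‖ := by linarith [hbd _ (hiter k)]
  rw [norm_smul, Real.norm_natCast] at h2
  linarith

lemma lens_eq (hB : IsSymUnitBall B) (hn : 1 ≤ n)
    (hkey : ∀ K : Set (V n), IsConvexBody K → 2 * circum B K ≤ mdiam B K)
    (hind : IsIndecomposable B) {v : V n} (hv : gauge B v ≤ 2) :
    ∃ ρ : ℝ, 0 ≤ ρ ∧ B ∩ (v +ᵥ B) = ((2:ℝ)⁻¹ • v) +ᵥ ρ • B := by
  obtain ⟨R, hR, hRB⟩ := aux_subset_ball hB
  set D : Set (V n) := B ∩ (v +ᵥ B) with hD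
  set C : Set (V n) := {t | ∀ w' ∈ D, w' + t ∈ B} with hC
  have hBeq : B = D + C := by
    ext z
    constructor
    · intro hz
      obtain ⟨w, hwD, hw⟩ := lens_center_point hB hn hkey hv hz
      refine Set.mem_add.2 ⟨w, hwD, z - w, ?_, by abel⟩
      intro w' hw'
      have := hw w' hw'
      rwa [show w' + (z - w) = z - w + w' from by abel]
    · intro hz
      obtain ⟨w, hwD, t, htC, rfl⟩ := Set.mem_add.1 hz
      exact htC w hwD
  have hDconv : Convex ℝ D := hB.1.1.inter (hB.1.1.vadd v)
  have hCconv : Convex ℝ C := by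
    intro t1 ht1 t2 ht2 a b ha hb hab
    intro w' hw'
    have hmem := hB.1.1 (ht1 w' hw') (ht2 w' hw') ha hb hab
    have hww : a • w' + b • w' = w' := by rw [← add_smul, hab, one_smul]
    have heq : a • (w' + t1) + b • (w' + t2) = (a • w' + b • w') + (a • t1 + b • t2) := by
      rw [smul_add, smul_add]; abel
    rw [heq, hww] at hmem
    exact hmem
  obtain ⟨⟨ρ, x, hρ, hDeq⟩, -⟩ := hind D C hDconv hCconv hBeq
  have hDsym : ∀ y, y ∈ D ↔ v - y ∈ D := by
    intro y
    rw [hD]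
    constructor
    · rintro ⟨h1, h2⟩
      have h2' : -v + y ∈ B := by
        have := Set.mem_vadd_set_iff_neg_vadd_mem.1 h2
        rwa [vadd_eq_add] at this
      constructor
      · have := aux_neg_mem hB h2'
        rwa [show -(-v + y) = v - y from by abel] at this
      · rw [Set.mem_vadd_set_iff_neg_vadd_mem, vadd_eq_add]
        have := aux_neg_mem hB h1
        rwa [show -v + (v - y) = -y from by abel]
    · rintro ⟨h1, h2⟩
      have h2' : -v + (v - y) ∈ B := by
        have := Set.mem_vadd_set_iff_neg_vadd_mem.1 h2
        rwa [vadd_eq_add] at this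
      rw [show -v + (v - y) = -y from by abel] at h2'
      constructor
      · have := aux_neg_mem hB h2'
        rwa [neg_neg] at this
      · rw [Set.mem_vadd_set_iff_neg_vadd_mem, vadd_eq_add]
        have := aux_neg_mem hB h1
        rwa [show -(v - y) = -v + y from by abel] at this
  have hvadd : x +ᵥ ρ • B = (v - x) +ᵥ ρ • B := by
    ext y
    constructor
    · intro hy
      rw [← hDeq] at hy
      have := (hDsym y).1 hy
      rw [hDeq] at this
      obtain ⟨b, hb, hbe⟩ := aux_mem_vadd_smul.1 this
      refine aux_mem_vadd_smul.2 ⟨-b, aux_neg_mem hB hb, ?_⟩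
      rw [smul_neg, show (v - x) + -(ρ • b) = v - (x + ρ • b) from by abel, hbe]
      abel
    · intro hy
      obtain ⟨b, hb, hbe⟩ := aux_mem_vadd_smul.1 hy
      have hyD : v - y ∈ x +ᵥ ρ • B := by
        refine aux_mem_vadd_smul.2 ⟨-b, aux_neg_mem hB hb, ?_⟩
        rw [smul_neg, ← hbe]
        abel
      rw [← hDeq] at hyD
      have := (hDsym (v - y)).1 hyD
      rw [show v - (v - y) = y from by abel] at this
      rwa [hDeq] at this
  have hSne : (ρ • B).Nonempty := ⟨ρ • 0, ⟨0, aux_zero_mem hB, rfl⟩⟩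
  have hSbd : ∀ s ∈ ρ • B, ‖s‖ ≤ |ρ| * R := by
    rintro s ⟨b, hb, rfl⟩
    rw [norm_smul, Real.norm_eq_abs]
    have : ‖b‖ ≤ R := by
      have := hRB hb
      simpa [Metric.mem_closedBall, dist_zero_right] using this
    exact mul_le_mul_of_nonneg_left this (abs_nonneg ρ)
  have hx : x = v - x := aux_vadd_cancel hSne hSbd hvadd
  have hcenter : x = (2:ℝ)⁻¹ • v := by
    have h2 : x + x = v := eq_sub_iff_add_eq.1 hx
    have h3 : (2:ℝ)⁻¹ • (x + x) = x := by
      rw [← two_smul ℝ x, smul_smul, show (2:ℝ)⁻¹ * 2 = 1 from by norm_num, one_smul]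
    rw [h2] at h3
    exact h3.symm
  refine ⟨ρ, hρ, by rw [hDeq, hcenter]⟩

end LensEq

section Final
variable {n : ℕ} {B : Set (V n)}

lemma lens_two (hB : IsSymUnitBall B) (hn : 1 ≤ n)
    (hkey : ∀ K : Set (V n), IsConvexBody K → 2 * circum B K ≤ mdiam B K)
    (hind : IsIndecomposable B) {p : V n} (hp : gauge B p = 1) :
    B ∩ ((p + p) +ᵥ B) = {p} := by
  have hpB : p ∈ B := aux_mem_of_gauge_le_one hB hp.le
  have hv : gauge B (p + p) ≤ 2 := by
    calc gauge B (p + p) ≤ gauge B p + gauge B p := aux_gauge_add hB _ _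
      _ = 2 := by rw [hp]; norm_num
  obtain ⟨ρ, hρ, hDeq⟩ := lens_eq hB hn hkey hind hv
  have hcen : (2:ℝ)⁻¹ • (p + p) = p := by
    rw [← two_smul ℝ p, smul_smul, show (2:ℝ)⁻¹ * 2 = 1 from by norm_num, one_smul]
  rw [hcen] at hDeq
  rcases hρ.eq_or_lt with h0 | hρpos
  · rw [hDeq, ← h0, zero_smul_set ⟨0, aux_zero_mem hB⟩]
    ext y
    simp [Set.mem_vadd_set, vadd_eq_add, eq_comm]
  · exfalso
    have hmem : p + ρ • p ∈ p +ᵥ ρ • B := aux_mem_vadd_smul.2 ⟨p, hpB, rfl⟩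
    rw [← hDeq] at hmem
    have hle : gauge B (p + ρ • p) ≤ 1 := gauge_le_one_of_mem hmem.1
    have heq : p + ρ • p = (1 + ρ) • p := by rw [add_smul, one_smul]
    rw [heq, gauge_smul_of_nonneg (by linarith), smul_eq_mul, hp, mul_one] at hle
    linarith

lemma no_half (hn : 3 ≤ n) (hB : IsSymUnitBall B) (hind : IsIndecomposable B)
    (hkey : ∀ K : Set (V n), IsConvexBody K → 2 * circum B K ≤ mdiam B K) : False := by
  have hn1 : 1 ≤ n := by omega
  obtain ⟨p, hpB, hppos, hpmax, hp⟩ := aux_maxnorm hB hn1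
  have hpne : p ≠ 0 := fun h => by rw [h] at hppos; simp at hppos
  -- a vector outside the span of p
  have hw : ∃ w : V n, w ∉ Submodule.span ℝ {p} := by
    by_contra h
    push_neg at h
    have htop : Submodule.span ℝ {p} = ⊤ := Submodule.eq_top_iff'.2 h
    have h1 : Module.finrank ℝ (Submodule.span ℝ {p} : Submodule ℝ (V n)) = 1 :=
      finrank_span_singleton hpne
    have h2 : Module.finrank ℝ (V n) = n := finrank_euclideanSpace_fin
    rw [htop, finrank_top] at h1
    omega
  obtain ⟨w, hw⟩ := hw
  set G : ℝ → ℝ := fun δ => gauge B (p + δ • w) with hG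
  have hGcont : Continuous G := by
    apply (continuous_gauge hB.1.1 (aux_nhds hB)).comp
    exact continuous_const.add (continuous_id.smul continuous_const)
  have hG0 : G 0 = 1 := by
    rw [hG]
    simp only [zero_smul, add_zero]
    exact hp
  set F : ℝ → ℝ := fun δ => gauge B ((G δ)⁻¹ • (p + δ • w) - p) with hF
  have hFcont : ContinuousAt F 0 := by
    apply (continuous_gauge hB.1.1 (aux_nhds hB)).continuousAt.comp
    apply ContinuousAt.sub ?_ continuousAt_const
    apply ContinuousAt.fun_smul
    · exact (hGcont.continuousAt).inv₀ (by rw [hG0]; norm_num)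
    · exact (continuous_const.add (continuous_id.smul continuous_const)).continuousAt
  have hF0 : F 0 = 0 := by
    rw [hF]
    simp only [zero_smul, add_zero, hG0, inv_one, one_smul, sub_self, gauge_zero]
  have hev : ∀ᶠ δ in nhds (0:ℝ), F δ < 1 ∧ (1:ℝ)/2 < G δ := by
    have h1 : ∀ᶠ δ in nhds (0:ℝ), F δ < 1 := by
      have : Filter.Tendsto F (nhds 0) (nhds 0) := by
        have h := hFcont
        rw [ContinuousAt, hF0] at h
        exact h
      exact this.eventually_lt_const (by norm_num)
    have h2 : ∀ᶠ δ in nhds (0:ℝ), (1:ℝ)/2 < G δ := by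
      have : Filter.Tendsto G (nhds 0) (nhds 1) := by
        have h := hGcont.continuousAt (x := 0)
        rw [ContinuousAt, hG0] at h
        exact h
      exact this.eventually_const_lt (by norm_num)
    exact h1.and h2
  obtain ⟨ε, hε, hball⟩ := Metric.eventually_nhds_iff.1 hev
  set δ : ℝ := ε/2 with hδ
  have hδne : δ ≠ 0 := by positivity
  obtain ⟨hF1, hG2⟩ := hball (show dist δ (0:ℝ) < ε by
    rw [Real.dist_eq, sub_zero, abs_of_pos (by positivity)]
    rw [hδ]; linarith)
  have hGpos : 0 < G δ := by linarith
  set u : V n := (G δ)⁻¹ • (p + δ • w) with hu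
  have hgu : gauge B u = 1 := by
    rw [hu, gauge_smul_of_nonneg (inv_nonneg.2 hGpos.le), smul_eq_mul]
    exact inv_mul_cancel₀ hGpos.ne'
  have hune : u ≠ p := by
    intro h
    apply hw
    have h1 : (G δ) • u = p + δ • w := by
      rw [hu, smul_smul, mul_inv_cancel₀ hGpos.ne', one_smul]
    rw [h] at h1
    have h2 : δ • w = (G δ) • p - p := by rw [h1]; abel
    have h3 : w = δ⁻¹ • ((G δ - 1) • p) := by
      rw [sub_smul, one_smul, ← h2, smul_smul, inv_mul_cancel₀ hδne, one_smul]
    rw [h3, smul_smul]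
    exact Submodule.smul_mem _ _ (Submodule.mem_span_singleton_self p)
  -- the lens around v = p
  have hvle : gauge B p ≤ 2 := by rw [hp]; norm_num
  obtain ⟨ρ, hρ, hDeq⟩ := lens_eq hB hn1 hkey hind hvle
  have hpD : p ∈ B ∩ (p +ᵥ B) := by
    refine ⟨hpB, ?_⟩
    rw [Set.mem_vadd_set_iff_neg_vadd_mem, vadd_eq_add, neg_add_cancel]
    exact aux_zero_mem hB
  have hupmem : u - p ∈ B := aux_mem_of_gauge_le_one hB hF1.le
  have huD : u ∈ B ∩ (p +ᵥ B) := by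
    refine ⟨aux_mem_of_gauge_le_one hB hgu.le, ?_⟩
    rw [Set.mem_vadd_set_iff_neg_vadd_mem, vadd_eq_add, neg_add_eq_sub]
    exact hupmem
  rcases hρ.eq_or_lt with h0 | hρpos
  · -- lens is a single point: u = p immediately
    rw [hDeq, ← h0, zero_smul_set ⟨0, aux_zero_mem hB⟩] at hpD huD
    obtain ⟨b1, hb1, hbe1⟩ := Set.mem_vadd_set.1 hpD
    obtain ⟨b2, hb2, hbe2⟩ := Set.mem_vadd_set.1 huD
    rw [Set.mem_zero] at hb1 hb2
    subst hb1
    subst hb2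
    exact hune (hbe2.symm.trans hbe1)
  · -- gauge of boundary points of the lens
    have hbnd : ∀ y, y ∈ B ∩ (p +ᵥ B) → gauge B y = 1 → gauge B (y - (2:ℝ)⁻¹ • p) = ρ := by
      intro y hyD hy1
      rw [hDeq] at hyD
      obtain ⟨b, hb, hbe⟩ := aux_mem_vadd_smul.1 hyD
      have hle : gauge B (y - (2:ℝ)⁻¹ • p) ≤ ρ := by
        refine gauge_le_of_mem hρpos.le ⟨b, hb, ?_⟩
        rw [← hbe]; abel
      rcases hle.lt_or_eq with hlt | heq
      · exfalso
        -- then y is in the interior of the lens, hence of B: contradiction with gauge = 1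
        have hint : ρ⁻¹ • (y - (2:ℝ)⁻¹ • p) ∈ interior B := by
          apply aux_mem_int_of_gauge_lt_one hB
          rw [gauge_smul_of_nonneg (inv_nonneg.2 hρpos.le), smul_eq_mul]
          rw [show (1:ℝ) = ρ⁻¹ * ρ from (inv_mul_cancel₀ hρpos.ne').symm]
          exact mul_lt_mul_of_pos_left hlt (inv_pos.2 hρpos)
        have hO : IsOpen ((2:ℝ)⁻¹ • p +ᵥ ρ • interior B) := by
          apply IsOpen.vadd
          exact isOpen_interior.smul₀ hρpos.ne'
        have hyO : y ∈ (2:ℝ)⁻¹ • p +ᵥ ρ • interior B := by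
          refine aux_mem_vadd_smul.2 ⟨ρ⁻¹ • (y - (2:ℝ)⁻¹ • p), hint, ?_⟩
          rw [smul_smul, mul_inv_cancel₀ hρpos.ne', one_smul]
          abel
        have hOB : ((2:ℝ)⁻¹ • p +ᵥ ρ • interior B) ⊆ B := by
          intro q hq
          obtain ⟨b', hb', hbe'⟩ := aux_mem_vadd_smul.1 hq
          have : q ∈ (2:ℝ)⁻¹ • p +ᵥ ρ • B :=
            aux_mem_vadd_smul.2 ⟨b', interior_subset hb', hbe'⟩
          rw [← hDeq] at this
          exact this.1
        have : y ∈ interior B := interior_maximal hOB hO hyO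
        have := aux_gauge_lt_one_of_int hB this
        rw [hy1] at this
        exact lt_irrefl 1 this
      · exact heq
    have hρval : ρ = 2⁻¹ := by
      have := hbnd p hpD hp
      rw [show p - (2:ℝ)⁻¹ • p = (2:ℝ)⁻¹ • p from by
        rw [sub_eq_iff_eq_add, ← add_smul]; norm_num] at this
      rw [← this, gauge_smul_of_nonneg (by norm_num), smul_eq_mul, hp, mul_one]
    have hub : gauge B (u - (2:ℝ)⁻¹ • p) = 2⁻¹ := by
      rw [hbnd u huD hgu, hρval]
    -- a = u + u - p lies in the lens around u, which is {u}
    have hga : gauge B (u + u - p) = 1 := by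
      have hps : (2:ℝ) • ((2:ℝ)⁻¹ • p) = p := by
        rw [smul_smul, show (2:ℝ) * 2⁻¹ = 1 from by norm_num, one_smul]
      have heq : u + u - p = (2:ℝ) • (u - (2:ℝ)⁻¹ • p) := by
        rw [smul_sub, hps, two_smul]
      rw [heq, gauge_smul_of_nonneg (by norm_num : (0:ℝ) ≤ 2), smul_eq_mul, hub]
      norm_num
    have haB : u + u - p ∈ B := aux_mem_of_gauge_le_one hB hga.le
    have haD : u + u - p ∈ B ∩ ((u + u) +ᵥ B) := by
      refine ⟨haB, ?_⟩
      rw [Set.mem_vadd_set_iff_neg_vadd_mem, vadd_eq_add,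
        show -(u + u) + (u + u - p) = -p from by abel]
      exact aux_neg_mem hB hpB
    rw [lens_two hB hn1 hkey hind hgu] at haD
    have : u + u - p = u := haD
    apply hune
    have h2 : u - p = 0 := by
      rw [show u - p = (u + u - p) - u from by abel, this, sub_self]
    exact sub_eq_zero.1 h2

end Final

/-- For an indecomposable unit ball that is not a sum of segments (n ≥ 3),
constant width bodies are exactly the dilates of `B`, they all have Jung
ratio `1/2`, and the Jung constant is strictly larger than `1/2`. -/
theorem stmt16 {n : ℕ} (hn : 3 ≤ n) (B : Set (V n)) (hB : IsSymUnitBall B)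
    (hind : IsIndecomposable B) (hseg : ¬IsSegmentSum B) :
    (∀ K : Set (V n), IsConvexBody K → IsConstWidth B K →
      ∃ (γ : ℝ) (c : V n), 0 < γ ∧ K = c +ᵥ γ • B) ∧
    (∀ K : Set (V n), IsConvexBody K → IsConstWidth B K →
      jungRatio B K = 1 / 2) ∧
    1 / 2 < jungConst B := by
  refine ⟨fun K hK hw => width_ball hn hB hind K hK hw,
    fun K hK hw => ratio_half hn hB hind K hK hw, ?_⟩
  by_contra h
  push_neg at h
  exact no_half hn hB hind (key_of_le_half hB (by omega) h)
end

section
/- In the Minkowski space M^3 whose unit ball is the regular octahedron (cross-polytope) B = conv{±e_1, ±e_2, ±e_3}, the regular simplex T = conv{(1,1,1)/3, (−1,−1,1)/3, (1,−1,−1)/3, (−1,1,−1)/3} satisfies R(T) = 1, D(T) = 4/3, hence j(T) = 3/4, and T attains the Jung constant: j(M^3) = 3/4. -/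
open Set Pointwise

-- Auxiliary development


def B3 : Set (V 3) := {x : V 3 | |x 0| + |x 1| + |x 2| ≤ 1}
noncomputable def N3 (x : V 3) : ℝ := |x 0| + |x 1| + |x 2|
def g0 (x : V 3) : ℝ := x 0 + x 1 + x 2
def g1 (x : V 3) : ℝ := -x 0 - x 1 + x 2
def g2 (x : V 3) : ℝ := x 0 - x 1 - x 2
def g3 (x : V 3) : ℝ := -x 0 + x 1 - x 2

lemma N3_nonneg (x : V 3) : 0 ≤ N3 x := by
  unfold N3; positivity

lemma abs_g0_le (x : V 3) : |g0 x| ≤ N3 x := by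
  unfold g0 N3; exact abs_add_three _ _ _
lemma abs_g1_le (x : V 3) : |g1 x| ≤ N3 x := by
  unfold g1 N3
  calc |-x 0 - x 1 + x 2| = |(-x 0) + (-x 1) + x 2| := by ring_nf
    _ ≤ |(-x 0)| + |(-x 1)| + |x 2| := abs_add_three _ _ _
    _ = |x 0| + |x 1| + |x 2| := by rw [abs_neg, abs_neg]
lemma abs_g2_le (x : V 3) : |g2 x| ≤ N3 x := by
  unfold g2 N3
  calc |x 0 - x 1 - x 2| = |x 0 + (-x 1) + (-x 2)| := by ring_nf
    _ ≤ |x 0| + |(-x 1)| + |(-x 2)| := abs_add_three _ _ _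
    _ = |x 0| + |x 1| + |x 2| := by rw [abs_neg, abs_neg]
lemma abs_g3_le (x : V 3) : |g3 x| ≤ N3 x := by
  unfold g3 N3
  calc |-x 0 + x 1 - x 2| = |(-x 0) + x 1 + (-x 2)| := by ring_nf
    _ ≤ |(-x 0)| + |x 1| + |(-x 2)| := abs_add_three _ _ _
    _ = |x 0| + |x 1| + |x 2| := by rw [abs_neg, abs_neg]

lemma g_sum (x : V 3) : g0 x + g1 x + g2 x + g3 x = 0 := by
  unfold g0 g1 g2 g3; ring

lemma N3_le_of_g {x : V 3} {r : ℝ} (h0 : |g0 x| ≤ r) (h1 : |g1 x| ≤ r)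
    (h2 : |g2 x| ≤ r) (h3 : |g3 x| ≤ r) : N3 x ≤ r := by
  rw [abs_le] at h0 h1 h2 h3
  unfold g0 g1 g2 g3 at *
  unfold N3
  rcases abs_cases (x 0) with ⟨e0, _⟩ | ⟨e0, _⟩ <;>
  rcases abs_cases (x 1) with ⟨e1, _⟩ | ⟨e1, _⟩ <;>
  rcases abs_cases (x 2) with ⟨e2, _⟩ | ⟨e2, _⟩ <;>
  rw [e0, e1, e2] <;> linarith [h0.1, h0.2, h1.1, h1.2, h2.1, h2.2, h3.1, h3.2]

lemma N3_smul (a : ℝ) (x : V 3) : N3 (a • x) = |a| * N3 x := by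
  unfold N3; simp [abs_mul]; ring

lemma N3_add_le (x y : V 3) : N3 (x + y) ≤ N3 x + N3 y := by
  unfold N3; simp only [PiLp.add_apply]
  have := abs_add_le (x 0) (y 0); have := abs_add_le (x 1) (y 1); have := abs_add_le (x 2) (y 2)
  linarith

lemma N3_neg (x : V 3) : N3 (-x) = N3 x := by
  unfold N3; simp

lemma g0_sub (x y : V 3) : g0 (x - y) = g0 x - g0 y := by unfold g0; simp; ring
lemma g1_sub (x y : V 3) : g1 (x - y) = g1 x - g1 y := by unfold g1; simp; ring
lemma g2_sub (x y : V 3) : g2 (x - y) = g2 x - g2 y := by unfold g2; simp; ring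
lemma g3_sub (x y : V 3) : g3 (x - y) = g3 x - g3 y := by unfold g3; simp; ring

lemma N3_eq_zero {x : V 3} (h : N3 x = 0) : x = 0 := by
  unfold N3 at h
  have h0 : |x 0| = 0 ∧ |x 1| = 0 ∧ |x 2| = 0 := by
    constructor
    · nlinarith [abs_nonneg (x 0), abs_nonneg (x 1), abs_nonneg (x 2)]
    constructor
    · nlinarith [abs_nonneg (x 0), abs_nonneg (x 1), abs_nonneg (x 2)]
    · nlinarith [abs_nonneg (x 0), abs_nonneg (x 1), abs_nonneg (x 2)]
  have e0 := abs_eq_zero.1 h0.1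
  have e1 := abs_eq_zero.1 h0.2.1
  have e2 := abs_eq_zero.1 h0.2.2
  ext i
  fin_cases i <;> assumption


lemma mem_B3 {x : V 3} : x ∈ B3 ↔ N3 x ≤ 1 := Iff.rfl

lemma mem_smul_B3 {ρ : ℝ} (hρ : 0 < ρ) {x : V 3} : x ∈ ρ • B3 ↔ N3 x ≤ ρ := by
  rw [mem_smul_set_iff_inv_smul_mem₀ hρ.ne']
  rw [mem_B3, N3_smul, abs_of_pos (inv_pos.2 hρ)]
  rw [inv_mul_le_iff₀ hρ, mul_one]

lemma mem_vadd_smul_B3 {ρ : ℝ} (hρ : 0 < ρ) {c x : V 3} :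
    x ∈ c +ᵥ ρ • B3 ↔ N3 (x - c) ≤ ρ := by
  rw [Set.mem_vadd_set_iff_neg_vadd_mem, vadd_eq_add, neg_add_eq_sub, mem_smul_B3 hρ]

lemma gauge_B3 (x : V 3) : gauge B3 x = N3 x := by
  unfold gauge
  have hset : {r : ℝ | 0 < r ∧ x ∈ r • B3} = {r : ℝ | 0 < r ∧ N3 x ≤ r} := by
    ext r
    simp only [Set.mem_setOf_eq, and_congr_right_iff]
    intro hr; exact mem_smul_B3 hr
  rw [hset]
  rcases eq_or_lt_of_le (N3_nonneg x) with h | h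
  · have hx : x = 0 := N3_eq_zero h.symm
    have : {r : ℝ | 0 < r ∧ N3 x ≤ r} = Set.Ioi 0 := by
      ext r; simp [← h]; intro hr; exact hr.le
    rw [this, ← h]
    simp [csInf_Ioi]
  · apply le_antisymm
    · exact csInf_le ⟨0, fun r hr => hr.1.le⟩ ⟨h, le_refl _⟩
    · exact le_csInf ⟨N3 x, h, le_refl _⟩ fun r hr => hr.2

lemma convex_N3_ball (c : V 3) (r : ℝ) : Convex ℝ {x : V 3 | N3 (x - c) ≤ r} := by
  intro x hx y hy a b ha hb hab
  simp only [Set.mem_setOf_eq] at *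
  have key : a • x + b • y - c = a • (x - c) + b • (y - c) := by
    have : a • (x - c) + b • (y - c) = a • x + b • y - (a + b) • c := by
      rw [smul_sub, smul_sub, add_smul]; abel
    rw [this, hab, one_smul]
  rw [key]
  calc N3 (a • (x - c) + b • (y - c)) ≤ N3 (a • (x - c)) + N3 (b • (y - c)) := N3_add_le _ _
    _ = |a| * N3 (x - c) + |b| * N3 (y - c) := by rw [N3_smul, N3_smul]
    _ = a * N3 (x - c) + b * N3 (y - c) := by rw [abs_of_nonneg ha, abs_of_nonneg hb]
    _ ≤ a * r + b * r := by
        apply add_le_add <;> apply mul_le_mul_of_nonneg_left <;> assumption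
    _ = r := by rw [← add_mul, hab, one_mul]

lemma convex_B3 : Convex ℝ B3 := by
  have := convex_N3_ball 0 1
  simpa [N3, B3] using this


noncomputable def q : Fin 4 → V 3 :=
  ![(WithLp.equiv 2 (Fin 3 → ℝ)).symm ![1/3, 1/3, 1/3],
    (WithLp.equiv 2 (Fin 3 → ℝ)).symm ![-1/3, -1/3, 1/3],
    (WithLp.equiv 2 (Fin 3 → ℝ)).symm ![1/3, -1/3, -1/3],
    (WithLp.equiv 2 (Fin 3 → ℝ)).symm ![-1/3, 1/3, -1/3]]
noncomputable def T3 : Set (V 3) := convexHull ℝ (Set.range q)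

lemma q00 : q 0 0 = 1/3 := by simp [q, PiLp.toLp_apply]
lemma q01 : q 0 1 = 1/3 := by simp [q, PiLp.toLp_apply]
lemma q02 : q 0 2 = 1/3 := by simp [q, PiLp.toLp_apply]
lemma q10 : q 1 0 = -1/3 := by simp [q, PiLp.toLp_apply]
lemma q11 : q 1 1 = -1/3 := by simp [q, PiLp.toLp_apply]
lemma q12 : q 1 2 = 1/3 := by simp [q, PiLp.toLp_apply]
lemma q20 : q 2 0 = 1/3 := by simp [q, PiLp.toLp_apply]
lemma q21 : q 2 1 = -1/3 := by simp [q, PiLp.toLp_apply]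
lemma q22 : q 2 2 = -1/3 := by simp [q, PiLp.toLp_apply]
lemma q30 : q 3 0 = -1/3 := by simp [q, PiLp.toLp_apply]
lemma q31 : q 3 1 = 1/3 := by simp [q, PiLp.toLp_apply]
lemma q32 : q 3 2 = -1/3 := by simp [q, PiLp.toLp_apply]

lemma N3_q (i : Fin 4) : N3 (q i) = 1 := by
  fin_cases i <;>
    simp [N3, q00, q01, q02, q10, q11, q12, q20, q21, q22, q30, q31, q32] <;> norm_num [abs_of_pos]

lemma T3_subset_B3 : T3 ⊆ B3 := by
  apply convexHull_min _ convex_B3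
  rintro x ⟨i, rfl⟩
  show N3 (q i) ≤ 1
  rw [N3_q]

lemma q_mem_T3 (i : Fin 4) : q i ∈ T3 := subset_convexHull ℝ _ ⟨i, rfl⟩

lemma circum_T3 : circum B3 T3 = 1 := by
  have mem1 : (1:ℝ) ∈ {ρ : ℝ | 0 < ρ ∧ ∃ c : V 3, T3 ⊆ c +ᵥ ρ • B3} := by
    refine ⟨one_pos, 0, ?_⟩
    intro x hx
    rw [mem_vadd_smul_B3 one_pos, sub_zero]
    exact T3_subset_B3 hx
  have lb : ∀ ρ ∈ {ρ : ℝ | 0 < ρ ∧ ∃ c : V 3, T3 ⊆ c +ᵥ ρ • B3}, (1:ℝ) ≤ ρ := by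
    rintro ρ ⟨hρ, c, hc⟩
    have hv : ∀ i, N3 (q i - c) ≤ ρ := fun i =>
      (mem_vadd_smul_B3 hρ).1 (hc (q_mem_T3 i))
    have h0 : g0 (q 0) - g0 c ≤ ρ := by
      rw [← g0_sub]; exact le_trans (le_abs_self _) (le_trans (abs_g0_le _) (hv 0))
    have h1 : g1 (q 1) - g1 c ≤ ρ := by
      rw [← g1_sub]; exact le_trans (le_abs_self _) (le_trans (abs_g1_le _) (hv 1))
    have h2 : g2 (q 2) - g2 c ≤ ρ := by
      rw [← g2_sub]; exact le_trans (le_abs_self _) (le_trans (abs_g2_le _) (hv 2))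
    have h3 : g3 (q 3) - g3 c ≤ ρ := by
      rw [← g3_sub]; exact le_trans (le_abs_self _) (le_trans (abs_g3_le _) (hv 3))
    have e0 : g0 (q 0) = 1 := by rw [g0, q00, q01, q02]; norm_num
    have e1 : g1 (q 1) = 1 := by rw [g1, q10, q11, q12]; norm_num
    have e2 : g2 (q 2) = 1 := by rw [g2, q20, q21, q22]; norm_num
    have e3 : g3 (q 3) = 1 := by rw [g3, q30, q31, q32]; norm_num
    have hs := g_sum c
    linarith
  exact le_antisymm (csInf_le ⟨1, lb⟩ mem1) (le_csInf ⟨1, mem1⟩ lb)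

lemma N3_pairs : ∀ i j : Fin 4, N3 (q i - q j) ≤ 4/3 := by
  intro i j
  fin_cases i <;> fin_cases j <;>
    simp [N3, q00, q01, q02, q10, q11, q12, q20, q21, q22, q30, q31, q32] <;> norm_num [abs_of_pos]

lemma claimA (i : Fin 4) : ∀ y ∈ T3, N3 (q i - y) ≤ 4/3 := by
  have : T3 ⊆ {y : V 3 | N3 (y - q i) ≤ 4/3} := by
    apply convexHull_min _ (convex_N3_ball (q i) (4/3))
    rintro y ⟨j, rfl⟩
    exact N3_pairs j i
  intro y hy
  have := this hy
  rw [show q i - y = -(y - q i) by abel, N3_neg]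
  exact this

lemma claimB : ∀ x ∈ T3, ∀ y ∈ T3, N3 (x - y) ≤ 4/3 := by
  intro x hx y hy
  have : T3 ⊆ {z : V 3 | N3 (z - y) ≤ 4/3} := by
    apply convexHull_min _ (convex_N3_ball y (4/3))
    rintro z ⟨i, rfl⟩
    exact claimA i y hy
  exact this hx

lemma mdiam_T3 : mdiam B3 T3 = 4/3 := by
  have mem : (4/3:ℝ) ∈ {d : ℝ | ∃ x ∈ T3, ∃ y ∈ T3, d = gauge B3 (x - y)} := by
    refine ⟨q 0, q_mem_T3 0, q 1, q_mem_T3 1, ?_⟩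
    rw [gauge_B3]
    rw [N3]
    simp [q00, q01, q02, q10, q11, q12]
    norm_num [abs_of_pos]
  have ub : ∀ d ∈ {d : ℝ | ∃ x ∈ T3, ∃ y ∈ T3, d = gauge B3 (x - y)}, d ≤ 4/3 := by
    rintro d ⟨x, hx, y, hy, rfl⟩
    rw [gauge_B3]
    exact claimB x hx y hy
  exact le_antisymm (csSup_le ⟨4/3, mem⟩ ub) (le_csSup ⟨4/3, ub⟩ mem)

lemma jungRatio_T3 : jungRatio B3 T3 = 3/4 := by
  rw [jungRatio, circum_T3, mdiam_T3]; norm_num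

lemma comb_mem {x : V 3} (h0 : -(1/3) ≤ g0 x) (h1 : -(1/3) ≤ g1 x)
    (h2 : -(1/3) ≤ g2 x) (h3 : -(1/3) ≤ g3 x) : x ∈ T3 := by
  set w : Fin 4 → ℝ := ![1/4 + 3/4 * g0 x, 1/4 + 3/4 * g1 x, 1/4 + 3/4 * g2 x, 1/4 + 3/4 * g3 x]
    with hw
  have hx : x = ∑ i, w i • q i := by
    ext j
    have : (∑ i, w i • q i) j = ∑ i, w i * q i j := by
      rw [Fin.sum_univ_four, Fin.sum_univ_four]; simp
    rw [this, Fin.sum_univ_four]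
    fin_cases j <;>
      simp [hw, q00, q01, q02, q10, q11, q12, q20, q21, q22, q30, q31, q32,
        g0, g1, g2, g3] <;>
      ring_nf
  rw [hx]
  apply (convex_convexHull ℝ (Set.range q)).sum_mem
  · intro i _
    fin_cases i <;> simp [hw] <;> linarith
  · rw [Fin.sum_univ_four]
    simp [hw]
    have := g_sum x
    linarith
  · intro i _
    exact subset_convexHull ℝ _ ⟨i, rfl⟩

lemma interior_T3 : (interior T3).Nonempty := by
  refine ⟨0, ?_⟩
  rw [mem_interior]
  refine ⟨{x : V 3 | -(1/3) < g0 x ∧ -(1/3) < g1 x ∧ -(1/3) < g2 x ∧ -(1/3) < g3 x}, ?_, ?_, ?_⟩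
  · rintro x ⟨h0, h1, h2, h3⟩
    exact comb_mem h0.le h1.le h2.le h3.le
  · have c0 : Continuous g0 := by unfold g0; fun_prop
    have c1 : Continuous g1 := by unfold g1; fun_prop
    have c2 : Continuous g2 := by unfold g2; fun_prop
    have c3 : Continuous g3 := by unfold g3; fun_prop
    exact (((isOpen_lt continuous_const c0).inter ((isOpen_lt continuous_const c1).inter
      ((isOpen_lt continuous_const c2).inter (isOpen_lt continuous_const c3)))) : _)
  · show -(1/3:ℝ) < g0 0 ∧ -(1/3:ℝ) < g1 0 ∧ -(1/3:ℝ) < g2 0 ∧ -(1/3:ℝ) < g3 0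
    norm_num [g0, g1, g2, g3]

lemma body_T3 : IsConvexBody T3 :=
  ⟨convex_convexHull ℝ _, (Set.finite_range q).isCompact_convexHull ℝ, interior_T3⟩



lemma coord_le_norm (x : V 3) (i : Fin 3) : |x i| ≤ ‖x‖ := by
  rw [EuclideanSpace.norm_eq]
  rw [show |x i| = Real.sqrt ((x i)^2) by rw [Real.sqrt_sq_eq_abs]]
  apply Real.sqrt_le_sqrt
  calc (x i)^2 = ‖x i‖^2 := by rw [Real.norm_eq_abs, sq_abs]
    _ ≤ ∑ j, ‖x j‖^2 :=
      Finset.single_le_sum (f := fun j => ‖x j‖^2) (fun j _ => by positivity) (Finset.mem_univ i)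

lemma N3_le_norm (x : V 3) : N3 x ≤ 3 * ‖x‖ := by
  have h0 := coord_le_norm x 0
  have h1 := coord_le_norm x 1
  have h2 := coord_le_norm x 2
  unfold N3; linarith

lemma mdiam_facts {K : Set (V 3)} (hK : IsConvexBody K) :
    0 < mdiam B3 K ∧ ∀ x ∈ K, ∀ y ∈ K, N3 (x - y) ≤ mdiam B3 K := by
  obtain ⟨hconv, hcomp, hint⟩ := hK
  obtain ⟨C, hC⟩ := isBounded_iff_forall_norm_le.1 hcomp.isBounded
  set Sd := {d : ℝ | ∃ x ∈ K, ∃ y ∈ K, d = gauge B3 (x - y)} with hSd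
  have hbdd : BddAbove Sd := by
    refine ⟨6 * C, ?_⟩
    rintro d ⟨x, hx, y, hy, rfl⟩
    rw [gauge_B3]
    calc N3 (x - y) ≤ 3 * ‖x - y‖ := N3_le_norm _
      _ ≤ 3 * (‖x‖ + ‖y‖) := by
          have := norm_sub_le x y; linarith
      _ ≤ 6 * C := by have := hC x hx; have := hC y hy; linarith
  have hpair : ∀ x ∈ K, ∀ y ∈ K, N3 (x - y) ≤ mdiam B3 K := by
    intro x hx y hy
    rw [← gauge_B3]
    exact le_csSup hbdd ⟨x, hx, y, hy, rfl⟩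
  refine ⟨?_, hpair⟩
  obtain ⟨x0, hx0⟩ := hint
  obtain ⟨ε, hε, hball⟩ := Metric.isOpen_iff.1 isOpen_interior x0 hx0
  set y := x0 + (ε/2) • EuclideanSpace.single (0 : Fin 3) (1:ℝ) with hy
  have hyK : y ∈ K := by
    apply interior_subset
    apply hball
    rw [Metric.mem_ball, dist_eq_norm, hy, add_sub_cancel_left, norm_smul,
      EuclideanSpace.norm_single]
    simp [abs_of_pos hε]
    linarith
  have hNy : N3 (y - x0) = ε/2 := by
    rw [hy, add_sub_cancel_left, N3_smul]
    have : N3 (EuclideanSpace.single (0 : Fin 3) (1:ℝ)) = 1 := by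
      unfold N3
      rw [EuclideanSpace.single_apply, EuclideanSpace.single_apply, EuclideanSpace.single_apply]
      norm_num [Fin.ext_iff]
    rw [this, abs_of_pos (by linarith : (0:ℝ) < ε/2)]
    ring
  have : ε/2 ≤ mdiam B3 K := by
    rw [← hNy]
    exact hpair y hyK x0 (interior_subset hx0)
  linarith

lemma sup_inf_facts (K : Set (V 3)) (hne : K.Nonempty) (C : ℝ) (hC : ∀ x ∈ K, ‖x‖ ≤ C)
    (g : V 3 → ℝ) (hg : ∀ x, |g x| ≤ N3 x) (hsub : ∀ x y, g (x - y) = g x - g y)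
    (D : ℝ) (hD : ∀ x ∈ K, ∀ y ∈ K, N3 (x - y) ≤ D) :
    (∀ x ∈ K, g x ≤ sSup (g '' K)) ∧ (∀ x ∈ K, sInf (g '' K) ≤ g x) ∧
      sSup (g '' K) ≤ sInf (g '' K) + D := by
  have habs : ∀ x ∈ K, |g x| ≤ 3 * C := by
    intro x hx
    exact le_trans (hg x) (le_trans (N3_le_norm x) (by have := hC x hx; linarith))
  have hba : BddAbove (g '' K) := by
    refine ⟨3 * C, ?_⟩
    rintro _ ⟨x, hx, rfl⟩
    exact le_trans (le_abs_self _) (habs x hx)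
  have hbb : BddBelow (g '' K) := by
    refine ⟨-(3 * C), ?_⟩
    rintro _ ⟨x, hx, rfl⟩
    exact le_trans (neg_le_neg (habs x hx)) (neg_abs_le _)
  refine ⟨fun x hx => le_csSup hba ⟨x, hx, rfl⟩, fun x hx => csInf_le hbb ⟨x, hx, rfl⟩, ?_⟩
  apply csSup_le (hne.image g)
  rintro _ ⟨x, hx, rfl⟩
  have : g x - D ≤ sInf (g '' K) := by
    apply le_csInf (hne.image g)
    rintro _ ⟨y, hy, rfl⟩
    have := le_trans (le_abs_self _) (le_trans (hg (x - y)) (hD x hx y hy))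
    rw [hsub] at this
    linarith
  linarith


lemma key_abs {gx M m tt D : ℝ} (hgM : gx ≤ M) (hgm : m ≤ gx)
    (htt : |tt| ≤ 3 * D / 4 - (M - m) / 2) : |gx - ((M + m) / 2 - tt)| ≤ 3/4 * D := by
  rw [abs_le] at htt ⊢
  constructor <;> linarith [htt.1, htt.2]

lemma abs_mul_le_self {t a : ℝ} (ht : |t| ≤ 1) (ha : 0 ≤ a) : |t * a| ≤ a := by
  rw [abs_mul, abs_of_nonneg ha]
  nlinarith [abs_nonneg t]

set_option maxHeartbeats 2000000 in
lemma bohnen {K : Set (V 3)} (hK : IsConvexBody K) :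
    circum B3 K ≤ 3/4 * mdiam B3 K := by
  obtain ⟨hD0, hDpair⟩ := mdiam_facts hK
  set D := mdiam B3 K with hDdef
  obtain ⟨hconv, hcomp, hint⟩ := hK
  have hne : K.Nonempty := hint.mono interior_subset
  obtain ⟨C, hC⟩ := isBounded_iff_forall_norm_le.1 hcomp.isBounded
  obtain ⟨hM0, hm0, hw0⟩ := sup_inf_facts K hne C hC g0 abs_g0_le g0_sub D hDpair
  obtain ⟨hM1, hm1, hw1⟩ := sup_inf_facts K hne C hC g1 abs_g1_le g1_sub D hDpair
  obtain ⟨hM2, hm2, hw2⟩ := sup_inf_facts K hne C hC g2 abs_g2_le g2_sub D hDpair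
  obtain ⟨hM3, hm3, hw3⟩ := sup_inf_facts K hne C hC g3 abs_g3_le g3_sub D hDpair
  set M0 := sSup (g0 '' K); set m0 := sInf (g0 '' K)
  set M1 := sSup (g1 '' K); set m1 := sInf (g1 '' K)
  set M2 := sSup (g2 '' K); set m2 := sInf (g2 '' K)
  set M3 := sSup (g3 '' K); set m3 := sInf (g3 '' K)
  obtain ⟨z, hz⟩ := id hne
  have hMm0 : m0 ≤ M0 := le_trans (hm0 z hz) (hM0 z hz)
  have hMm1 : m1 ≤ M1 := le_trans (hm1 z hz) (hM1 z hz)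
  have hMm2 : m2 ≤ M2 := le_trans (hm2 z hz) (hM2 z hz)
  have hMm3 : m3 ≤ M3 := le_trans (hm3 z hz) (hM3 z hz)
  -- sum bounds
  have h3M : M0 + M1 + M2 + M3 ≤ 3 * D := by
    have : M0 ≤ 3 * D - M1 - M2 - M3 := by
      apply csSup_le (hne.image g0)
      rintro _ ⟨x, hx, rfl⟩
      have hgs := g_sum x
      have := hm1 x hx; have := hm2 x hx; have := hm3 x hx
      linarith [hw1, hw2, hw3]
    linarith
  have h3m : -(3 * D) ≤ m0 + m1 + m2 + m3 := by
    have : -(3 * D) - m1 - m2 - m3 ≤ m0 := by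
      apply le_csInf (hne.image g0)
      rintro _ ⟨x, hx, rfl⟩
      have hgs := g_sum x
      have := hM1 x hx; have := hM2 x hx; have := hM3 x hx
      linarith [hw1, hw2, hw3]
    linarith
  -- widths
  obtain ⟨w0, hw0d⟩ : ∃ a : ℝ, a = M0 - m0 := ⟨_, rfl⟩; obtain ⟨w1, hw1d⟩ : ∃ a : ℝ, a = M1 - m1 := ⟨_, rfl⟩
  obtain ⟨w2, hw2d⟩ : ∃ a : ℝ, a = M2 - m2 := ⟨_, rfl⟩; obtain ⟨w3, hw3d⟩ : ∃ a : ℝ, a = M3 - m3 := ⟨_, rfl⟩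
  have hw0D : w0 ≤ D := by rw [hw0d]; linarith [hw0]
  have hw1D : w1 ≤ D := by rw [hw1d]; linarith [hw1]
  have hw2D : w2 ≤ D := by rw [hw2d]; linarith [hw2]
  have hw3D : w3 ≤ D := by rw [hw3d]; linarith [hw3]
  have hw0p : 0 ≤ w0 := by rw [hw0d]; linarith
  have hw1p : 0 ≤ w1 := by rw [hw1d]; linarith
  have hw2p : 0 ≤ w2 := by rw [hw2d]; linarith
  have hw3p : 0 ≤ w3 := by rw [hw3d]; linarith
  obtain ⟨S, hSdef⟩ : ∃ a : ℝ, a = (M0 + m0 + M1 + m1 + M2 + m2 + M3 + m3) / 2 := ⟨_, rfl⟩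
  obtain ⟨W, hWdef⟩ : ∃ a : ℝ, a = 3 * D - (w0 + w1 + w2 + w3) / 2 := ⟨_, rfl⟩
  have hWD : D ≤ W := by rw [hWdef]; linarith
  have hWpos : 0 < W := lt_of_lt_of_le hD0 hWD
  have hSW : |S| ≤ W := by
    rw [abs_le]
    constructor
    · rw [hSdef, hWdef, hw0d, hw1d, hw2d, hw3d]; linarith
    · rw [hSdef, hWdef, hw0d, hw1d, hw2d, hw3d]; linarith
  obtain ⟨t, htdef⟩ : ∃ a : ℝ, a = S / W := ⟨_, rfl⟩
  have ht1 : |t| ≤ 1 := by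
    rw [htdef, abs_div, abs_of_pos hWpos]
    rw [div_le_one hWpos]
    exact hSW
  obtain ⟨t0, ht0d⟩ : ∃ a : ℝ, a = t * (3 * D / 4 - w0 / 2) := ⟨_, rfl⟩
  obtain ⟨t1, ht1d⟩ : ∃ a : ℝ, a = t * (3 * D / 4 - w1 / 2) := ⟨_, rfl⟩
  obtain ⟨t2, ht2d⟩ : ∃ a : ℝ, a = t * (3 * D / 4 - w2 / 2) := ⟨_, rfl⟩
  obtain ⟨t3, ht3d⟩ : ∃ a : ℝ, a = t * (3 * D / 4 - w3 / 2) := ⟨_, rfl⟩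
  obtain ⟨c0s, hc0d⟩ : ∃ a : ℝ, a = (M0 + m0) / 2 - t0 := ⟨_, rfl⟩
  obtain ⟨c1s, hc1d⟩ : ∃ a : ℝ, a = (M1 + m1) / 2 - t1 := ⟨_, rfl⟩
  obtain ⟨c2s, hc2d⟩ : ∃ a : ℝ, a = (M2 + m2) / 2 - t2 := ⟨_, rfl⟩
  obtain ⟨c3s, hc3d⟩ : ∃ a : ℝ, a = (M3 + m3) / 2 - t3 := ⟨_, rfl⟩
  have htW : t * W = S := by rw [htdef]; exact div_mul_cancel₀ S hWpos.ne'
  have hcsum : c0s + c1s + c2s + c3s = 0 := by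
    rw [hc0d, hc1d, hc2d, hc3d, ht0d, ht1d, ht2d, ht3d]
    have : t * (3 * D / 4 - w0 / 2) + t * (3 * D / 4 - w1 / 2) + t * (3 * D / 4 - w2 / 2)
        + t * (3 * D / 4 - w3 / 2) = t * W := by rw [hWdef]; ring
    rw [hSdef] at htW
    linarith [this, htW]
  set c : V 3 := (WithLp.equiv 2 (Fin 3 → ℝ)).symm ![(c0s + c2s)/2, (c0s + c3s)/2, (c0s + c1s)/2]
    with hcdef
  have hcc : c 0 = (c0s + c2s)/2 ∧ c 1 = (c0s + c3s)/2 ∧ c 2 = (c0s + c1s)/2 := by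
    refine ⟨?_, ?_, ?_⟩ <;> simp [hcdef, PiLp.toLp_apply]
  have hg0c : g0 c = c0s := by rw [g0, hcc.1, hcc.2.1, hcc.2.2]; linarith
  have hg1c : g1 c = c1s := by rw [g1, hcc.1, hcc.2.1, hcc.2.2]; linarith
  have hg2c : g2 c = c2s := by rw [g2, hcc.1, hcc.2.1, hcc.2.2]; linarith
  have hg3c : g3 c = c3s := by
    rw [g3, hcc.1, hcc.2.1, hcc.2.2]
    have h := hcsum
    ring_nf
    ring_nf at h
    linarith [h]
  -- |t_i| bounds
  have habs0 : |t0| ≤ 3 * D / 4 - (M0 - m0) / 2 := by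
    rw [ht0d, ← hw0d]
    exact le_trans (abs_mul_le_self ht1 (by linarith)) (by linarith)
  have habs1 : |t1| ≤ 3 * D / 4 - (M1 - m1) / 2 := by
    rw [ht1d, ← hw1d]
    exact le_trans (abs_mul_le_self ht1 (by linarith)) (by linarith)
  have habs2 : |t2| ≤ 3 * D / 4 - (M2 - m2) / 2 := by
    rw [ht2d, ← hw2d]
    exact le_trans (abs_mul_le_self ht1 (by linarith)) (by linarith)
  have habs3 : |t3| ≤ 3 * D / 4 - (M3 - m3) / 2 := by
    rw [ht3d, ← hw3d]
    exact le_trans (abs_mul_le_self ht1 (by linarith)) (by linarith)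
  have hρpos : 0 < 3/4 * D := by linarith
  -- the covering
  have hcover : ∀ x ∈ K, N3 (x - c) ≤ 3/4 * D := by
    intro x hx
    apply N3_le_of_g
    · rw [g0_sub, hg0c, hc0d]; exact key_abs (hM0 x hx) (hm0 x hx) habs0
    · rw [g1_sub, hg1c, hc1d]; exact key_abs (hM1 x hx) (hm1 x hx) habs1
    · rw [g2_sub, hg2c, hc2d]; exact key_abs (hM2 x hx) (hm2 x hx) habs2
    · rw [g3_sub, hg3c, hc3d]; exact key_abs (hM3 x hx) (hm3 x hx) habs3
  have hmem : (3/4 * D) ∈ {ρ : ℝ | 0 < ρ ∧ ∃ c' : V 3, K ⊆ c' +ᵥ ρ • B3} := by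
    refine ⟨hρpos, c, ?_⟩
    intro x hx
    rw [mem_vadd_smul_B3 hρpos]
    exact hcover x hx
  exact csInf_le ⟨0, fun ρ h => h.1.le⟩ hmem

lemma jungConst_B3 : jungConst B3 = 3/4 := by
  have hmem : (3/4 : ℝ) ∈ {j : ℝ | ∃ K : Set (V 3), IsConvexBody K ∧ j = jungRatio B3 K} :=
    ⟨T3, body_T3, jungRatio_T3.symm⟩
  have hub : ∀ j ∈ {j : ℝ | ∃ K : Set (V 3), IsConvexBody K ∧ j = jungRatio B3 K}, j ≤ 3/4 := by
    rintro j ⟨K, hK, rfl⟩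
    have hD := (mdiam_facts hK).1
    have hb := bohnen hK
    rw [jungRatio, div_le_iff₀ hD]
    linarith
  exact le_antisymm (csSup_le ⟨3/4, hmem⟩ hub) (le_csSup ⟨3/4, hub⟩ hmem)

/-- In `ℓ₁³` (unit ball the regular octahedron), the regular simplex `T`
with vertices `(±1,±1,±1)/3` (even sign changes) has `R(T) = 1`,
`D(T) = 4/3`, `j(T) = 3/4`, and attains the Jung constant. -/
theorem stmt17 :
    let B : Set (V 3) := {x : V 3 | |x 0| + |x 1| + |x 2| ≤ 1}
    let p : Fin 4 → V 3 :=
      ![(WithLp.equiv 2 (Fin 3 → ℝ)).symm ![1/3, 1/3, 1/3],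
        (WithLp.equiv 2 (Fin 3 → ℝ)).symm ![-1/3, -1/3, 1/3],
        (WithLp.equiv 2 (Fin 3 → ℝ)).symm ![1/3, -1/3, -1/3],
        (WithLp.equiv 2 (Fin 3 → ℝ)).symm ![-1/3, 1/3, -1/3]]
    let T : Set (V 3) := convexHull ℝ (Set.range p)
    circum B T = 1 ∧ mdiam B T = 4/3 ∧ jungRatio B T = 3/4 ∧
      jungConst B = 3/4 := by
  intro B p T
  refine ⟨circum_T3, mdiam_T3, jungRatio_T3, jungConst_B3⟩
end

section
/- For any convex body K in a Minkowski space, r(K)/D(K) ≤ 1/(s(K)+1), where r is the inradius, D the diameter, and s the Minkowski asymmetry. -/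
open Set Pointwise

/-- `r(K)/D(K) ≤ 1/(s(K)+1)`. -/
theorem stmt19 {n : ℕ} (B K : Set (V n)) (hB : IsSymUnitBall B)
    (hK : IsConvexBody K) :
    inrad B K / mdiam B K ≤ 1 / (asym K + 1) := by
  obtain ⟨⟨hBconv, hBcomp, hBint⟩, hBsym⟩ := hB
  obtain ⟨hKconv, hKcomp, hKint⟩ := hK
  have hs0 : 0 ≤ asym K := Real.sInf_nonneg (fun x hx => hx.1.le)
  have hs1 : (0:ℝ) < asym K + 1 := by linarith
  have hKne : K.Nonempty := hKint.mono interior_subset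
  rcases subsingleton_or_nontrivial (V n) with hsub | hnt
  · -- trivial space: inrad = 0
    have hnb : ¬ BddAbove {ρ : ℝ | 0 < ρ ∧ ∃ c : V n, c +ᵥ ρ • B ⊆ K} := by
      rintro ⟨M, hM⟩
      have hmem : |M| + 1 ∈ {ρ : ℝ | 0 < ρ ∧ ∃ c : V n, c +ᵥ ρ • B ⊆ K} := by
        refine ⟨by positivity, 0, ?_⟩
        intro x _
        obtain ⟨k, hk⟩ := hKne
        have : x = k := Subsingleton.elim x k
        rwa [this]
      have := hM hmem
      have := le_abs_self M
      linarith
    have : inrad B K = 0 := Real.sSup_of_not_bddAbove hnb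
    rw [this, zero_div]
    exact div_nonneg zero_le_one hs1.le
  · -- main case
    -- basic facts about B
    have h0B : (0 : V n) ∈ interior B := by
      obtain ⟨x, hx⟩ := hBint
      have hx' : -x ∈ interior B := by
        rw [hBsym]
        exact interior_maximal (Set.neg_subset_neg.mpr interior_subset)
          isOpen_interior.neg (Set.neg_mem_neg.mpr hx)
      have h := hBconv.interior hx hx' (by norm_num : (0:ℝ) ≤ 1/2)
        (by norm_num : (0:ℝ) ≤ 1/2) (by norm_num)
      simpa [smul_neg] using h
    have hBnhds : B ∈ nhds (0 : V n) := mem_interior_iff_mem_nhds.mp h0B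
    have habs : Absorbent ℝ B := absorbent_nhds_zero hBnhds
    have hvb : Bornology.IsVonNBounded ℝ B :=
      (NormedSpace.isVonNBounded_iff _).mpr hBcomp.isBounded
    have hBcl : closure B = B := hBcomp.isClosed.closure_eq
    have memB : ∀ z : V n, gauge B z ≤ 1 → z ∈ B := fun z h => by
      have := (gauge_le_one_iff_mem_closure hBconv hBnhds).mp h
      rwa [hBcl] at this
    have hsymB : ∀ x ∈ B, -x ∈ B := fun x hx => by
      rw [hBsym]; exact Set.neg_mem_neg.mpr hx
    -- membership in dilates via gauge
    have memSmul : ∀ (t : ℝ) (z : V n), 0 < t → gauge B z ≤ t → z ∈ t • B := by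
      intro t z ht hz
      rw [Set.mem_smul_set_iff_inv_smul_mem₀ ht.ne']
      apply memB
      rw [gauge_smul_of_nonneg (inv_nonneg.mpr ht.le), smul_eq_mul]
      rw [inv_mul_le_iff₀ ht, mul_one]
      exact hz
    -- diameter set is bounded above
    obtain ⟨R, hR⟩ := hKcomp.isBounded.subset_closedBall 0
    obtain ⟨δ, hδ, hδB⟩ := Metric.mem_nhds_iff.mp hBnhds
    have hDbdd : BddAbove {d : ℝ | ∃ x ∈ K, ∃ y ∈ K, d = gauge B (x - y)} := by
      refine ⟨2 * R / δ, ?_⟩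
      rintro d ⟨x, hx, y, hy, rfl⟩
      have h1 : δ * gauge B (x - y) ≤ ‖x - y‖ := mul_gauge_le_norm hδB
      have h2 : ‖x - y‖ ≤ 2 * R := by
        have hx' := hR hx; have hy' := hR hy
        simp only [Metric.mem_closedBall, dist_zero_right] at hx' hy'
        calc ‖x - y‖ ≤ ‖x‖ + ‖y‖ := norm_sub_le x y
          _ ≤ 2 * R := by linarith
      rw [le_div_iff₀ hδ]
      linarith [mul_comm δ (gauge B (x - y))]
    set D := mdiam B K with hD
    have hDmem : ∀ x ∈ K, ∀ y ∈ K, gauge B (x - y) ≤ D :=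
      fun x hx y hy => le_csSup hDbdd ⟨x, hx, y, hy, rfl⟩
    have hDnn : 0 ≤ D := by
      obtain ⟨k, hk⟩ := hKne
      have := hDmem k hk k hk
      have h0 : gauge B (k - k) = 0 := by rw [sub_self, gauge_zero]
      linarith [le_csSup hDbdd ⟨k, hk, k, hk, h0.symm⟩, gauge_zero (s := B)]
    -- key claim : inrad ≤ D / (s+1)
    have claim : inrad B K ≤ D / (asym K + 1) := by
      apply Real.sSup_le _ (div_nonneg hDnn hs1.le)
      rintro ρ ⟨hρ, c, hc⟩
      -- a gauge-one vector b ∈ B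
      obtain ⟨v, hv⟩ := exists_ne (0 : V n)
      have hgv : 0 < gauge B v := (gauge_pos habs hvb).mpr hv
      set b := (gauge B v)⁻¹ • v with hb
      have hgb : gauge B b = 1 := by
        rw [hb, gauge_smul_of_nonneg (inv_nonneg.mpr hgv.le), smul_eq_mul,
          inv_mul_cancel₀ hgv.ne']
      have hbB : b ∈ B := memB b hgb.le
      have hmemball : ∀ w ∈ B, c + ρ • w ∈ K := by
        intro w hw
        apply hc
        rw [Set.mem_vadd_set_iff_neg_vadd_mem]
        have : -c +ᵥ (c + ρ • w) = ρ • w := by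
          simp [vadd_eq_add]
        rw [this]
        exact Set.smul_mem_smul_set hw
      -- D ≥ 2ρ
      have hD2 : 2 * ρ ≤ D := by
        have h1 : c + ρ • b ∈ K := hmemball b hbB
        have h2 : c + ρ • (-b) ∈ K := hmemball (-b) (hsymB b hbB)
        have heq : (c + ρ • b) - (c + ρ • (-b)) = (2 * ρ) • b := by
          rw [smul_neg]; rw [two_mul, add_smul]; abel
        have := hDmem _ h1 _ h2
        rw [heq, gauge_smul_of_nonneg (by positivity), smul_eq_mul, hgb, mul_one] at this
        exact this
      have hDρ : ρ < D := by linarith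
      -- K ⊆ c + (D - ρ) B , i.e. gauge (y - c) ≤ D - ρ
      have hKin : ∀ y ∈ K, gauge B (y - c) ≤ D - ρ := by
        intro y hy
        rcases eq_or_ne (y - c) 0 with h0 | h0
        · rw [h0, gauge_zero]; linarith
        · set t := gauge B (y - c) with ht
          have htpos : 0 < t := (gauge_pos habs hvb).mpr h0
          set b₀ := t⁻¹ • (y - c) with hb₀
          have hgb₀ : gauge B b₀ = 1 := by
            rw [hb₀, gauge_smul_of_nonneg (inv_nonneg.mpr htpos.le), smul_eq_mul,
              inv_mul_cancel₀ htpos.ne']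
          have hb₀B : b₀ ∈ B := memB b₀ hgb₀.le
          have hx : c + ρ • (-b₀) ∈ K := hmemball (-b₀) (hsymB b₀ hb₀B)
          have heq : y - (c + ρ • (-b₀)) = (t + ρ) • b₀ := by
            rw [hb₀]
            match_scalars <;> field_simp <;> ring
          have := hDmem y hy _ hx
          rw [heq, gauge_smul_of_nonneg (by positivity), smul_eq_mul, hgb₀, mul_one] at this
          linarith
      -- asymmetry bound: -K ⊆ c' + λ K with λ = (D - ρ)/ρ
      set lam := (D - ρ) / ρ with hlam
      have hlampos : 0 < lam := div_pos (by linarith) hρ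
      have hsub : -K ⊆ (-(1 + lam) • c) +ᵥ lam • K := by
        intro z hz
        rw [Set.mem_neg] at hz
        -- z = -y with y = -z ∈ K
        have hgz : gauge B (-z - c) ≤ D - ρ := hKin (-z) hz
        have hmem' : -z - c ∈ (D - ρ) • B := memSmul _ _ (by linarith) hgz
        obtain ⟨w, hw, hweq⟩ := hmem'
        -- w ∈ B, -z - c = (D-ρ) • w ; then  -z = c + (lam * ρ) • w
        have hwK : c + ρ • (-w) ∈ K := hmemball (-w) (hsymB w hw)
        rw [Set.mem_vadd_set_iff_neg_vadd_mem]
        refine ⟨c + ρ • (-w), hwK, ?_⟩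
        have hDrw : (D - ρ) = lam * ρ := by
          rw [hlam, div_mul_cancel₀ _ hρ.ne']
        -- goal: lam • (c + ρ • (-w)) = -(-(1+lam) • c) +ᵥ z  — check orientation
        have hweq' : (D - ρ) • w = -z - c := hweq
        have hz' : z = -c - (D - ρ) • w := by
          rw [hweq']; abel
        rw [hz', hDrw]
        simp only [vadd_eq_add, smul_add, smul_neg, smul_smul, neg_smul, one_smul, add_smul]
        abel
      have hmemasym : lam ∈ {ρ : ℝ | 0 < ρ ∧ ∃ c : V n, -K ⊆ c +ᵥ ρ • K} :=
        ⟨hlampos, _, hsub⟩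
      have hasym_le : asym K ≤ lam :=
        csInf_le ⟨0, fun x hx => hx.1.le⟩ hmemasym
      -- conclude ρ ≤ D / (s+1)
      rw [le_div_iff₀ hs1]
      have : (asym K + 1) * ρ ≤ (lam + 1) * ρ := by nlinarith
      have hlamval : (lam + 1) * ρ = D := by
        rw [hlam, add_mul, div_mul_cancel₀ _ hρ.ne']; ring
      nlinarith
    rcases eq_or_lt_of_le hDnn with hD0 | hDpos
    · rw [← hD0, div_zero]
      exact div_nonneg zero_le_one hs1.le
    · rw [div_le_div_iff₀ hDpos hs1]
      have := (le_div_iff₀ hs1).mp claim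
      linarith
end
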